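/- arXiv:2209.07266 — 7 statements merged into one kernel-verified Lean document; each statement's English description precedes it below -/
import Mathlib

section
/- Let 1 < p ≤ 2 and let σ₁ ≥ σ₂ ≥ ⋯ ≥ σ_m > 0. For any ε ∈ (0,1), all m ∈ ℕ and all integers 1 ≤ n < m with n ≤ ε·σ_m²·m^{2/p*}, the random n×m Gaussian matrix G_{n,m} satisfies, with probability at least 1 − ε, sup{ ‖x‖₂ : x ∈ 𝓔_{p,σ}^m, G_{n,m}x = 0 } ≥ σ₁/(1 + σ₁). -/
open MeasureTheory ProbabilityTheory Real
open scoped ENNReal NNReal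

noncomputable section

/-- Membership in the `ℓ_p`-ellipsoid `𝓔_{p,σ}^m` with semiaxes `σ₁ ≥ σ₂ ≥ ⋯` (indexed
1-based), for a real exponent `0 < p < ∞`. -/
def memEllR (p : ℝ) {m : ℕ} (σ : ℕ → ℝ) (x : Fin m → ℝ) : Prop :=
  ∑ i : Fin m, |x i| ^ p / σ ((i : ℕ) + 1) ^ p ≤ 1

/-- The Euclidean norm on `ℝ^m`. -/
def l2norm {m : ℕ} (x : Fin m → ℝ) : ℝ := Real.sqrt (∑ i, (x i) ^ 2)

/-- The law of an `n × m` random matrix with independent standard Gaussian `N(0,1)` entries. -/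
def gaussMatrix (n m : ℕ) : Measure (Fin n → Fin m → ℝ) :=
  Measure.pi fun _ => Measure.pi fun _ => gaussianReal 0 1

namespace Stmt5Aux

instance : IsProbabilityMeasure (gaussMatrix n m) := by
  unfold gaussMatrix; infer_instance

variable {n m : ℕ}

-- copy of defs for testing (will merge)
def rowSpan (G : Fin n → Fin m → ℝ) : Submodule ℝ (EuclideanSpace ℝ (Fin m)) :=
  Submodule.span ℝ (Set.range fun i => (WithLp.toLp 2 (G i) : EuclideanSpace ℝ (Fin m)))
def projVec (G : Fin n → Fin m → ℝ) (j : Fin m) : EuclideanSpace ℝ (Fin m) :=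
  ((rowSpan G).orthogonalProjectionOnto (EuclideanSpace.single j 1) : EuclideanSpace ℝ (Fin m))
def projSq (G : Fin n → Fin m → ℝ) (j : Fin m) : ℝ := ‖projVec G j‖ ^ 2
def uvec (G : Fin n → Fin m → ℝ) (c : Fin n → ℝ) : EuclideanSpace ℝ (Fin m) :=
  WithLp.toLp 2 (fun j => ∑ i, c i * G i j)
def ratio (G : Fin n → Fin m → ℝ) (j : Fin m) (c : Fin n → ℝ) : ℝ :=
  (uvec G c j) ^ 2 / (∑ jj, (uvec G c jj) ^ 2)
def fE (j : Fin m) (G : Fin n → Fin m → ℝ) : ℝ≥0∞ :=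
  ⨆ c : Fin n → ℚ, ENNReal.ofReal (ratio G j (fun i => (c i : ℝ)))
lemma uvec_eq_sum (G : Fin n → Fin m → ℝ) (c : Fin n → ℝ) :
    uvec G c = ∑ i, c i • (WithLp.toLp 2 (G i) : EuclideanSpace ℝ (Fin m)) := by
  ext j; simp [uvec, Finset.sum_apply]
lemma uvec_mem (G : Fin n → Fin m → ℝ) (c : Fin n → ℝ) : uvec G c ∈ rowSpan G := by
  rw [uvec_eq_sum]
  exact Submodule.sum_smul_mem _ _ fun i _ => Submodule.subset_span ⟨i, rfl⟩
lemma sum_sq_eq_normSq (x : EuclideanSpace ℝ (Fin m)) : ∑ i, (x i) ^ 2 = ‖x‖ ^ 2 := by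
  rw [EuclideanSpace.norm_eq, Real.sq_sqrt (by positivity)]
  simp [Real.norm_eq_abs, sq_abs]
lemma inner_single_left' (j : Fin m) (x : EuclideanSpace ℝ (Fin m)) :
    (inner ℝ (EuclideanSpace.single j (1:ℝ)) x : ℝ) = x j := by
  simp [EuclideanSpace.inner_single_left]

lemma inner_eq_proj (G : Fin n → Fin m → ℝ) (j : Fin m) {u : EuclideanSpace ℝ (Fin m)}
    (hu : u ∈ rowSpan G) : (inner ℝ u (EuclideanSpace.single j (1:ℝ)) : ℝ) = inner ℝ u (projVec G j) := by
  have h := Submodule.sub_starProjection_mem_orthogonal (K := rowSpan G) (EuclideanSpace.single j 1)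
  have h0 : (inner ℝ u (EuclideanSpace.single j (1:ℝ) - projVec G j) : ℝ) = 0 :=
    (Submodule.mem_orthogonal _ _).mp h u hu
  rw [inner_sub_right] at h0
  linarith

lemma ratio_le_projSq (G : Fin n → Fin m → ℝ) (j : Fin m) (c : Fin n → ℝ) :
    ratio G j c ≤ projSq G j := by
  set u := uvec G c with hu
  have hden : ∑ jj, (u jj) ^ 2 = ‖u‖ ^ 2 := sum_sq_eq_normSq u
  rcases eq_or_ne (‖u‖ ^ 2) 0 with h0 | h0
  · rw [ratio, hden, h0, div_zero]
    exact sq_nonneg _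
  · have hnum : u j = inner ℝ u (projVec G j) := by
      rw [← inner_eq_proj G j (uvec_mem G c)]
      rw [real_inner_comm]
      exact (inner_single_left' j u).symm
    have hcs : (inner ℝ u (projVec G j) : ℝ) ^ 2 ≤ ‖u‖ ^ 2 * ‖projVec G j‖ ^ 2 := by
      have := real_inner_mul_inner_self_le u (projVec G j)
      rw [real_inner_self_eq_norm_sq, real_inner_self_eq_norm_sq] at this
      nlinarith [this]
    have hpos : 0 < ‖u‖ ^ 2 := lt_of_le_of_ne (sq_nonneg _) (Ne.symm h0)
    rw [ratio, hden, div_le_iff₀ hpos, projSq]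
    calc uvec G c j ^ 2 = (inner ℝ u (projVec G j) : ℝ) ^ 2 := by rw [← hnum]
      _ ≤ ‖u‖ ^ 2 * ‖projVec G j‖ ^ 2 := hcs
      _ = ‖projVec G j‖ ^ 2 * ‖u‖ ^ 2 := by ring

lemma fE_le (G : Fin n → Fin m → ℝ) (j : Fin m) :
    fE j G ≤ ENNReal.ofReal (projSq G j) :=
  iSup_le fun c => ENNReal.ofReal_le_ofReal (ratio_le_projSq G j _)


lemma ofReal_projSq_le_fE (G : Fin n → Fin m → ℝ) (j : Fin m) :
    ENNReal.ofReal (projSq G j) ≤ fE j G := by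
  set w := projVec G j with hw
  rcases eq_or_ne w 0 with h0 | h0
  · simp [projSq, ← hw, h0]
  · -- `w` is a combination of the rows
    have hwmem : w ∈ rowSpan G := by
      rw [hw, projVec]
      exact SetLike.coe_mem _
    rw [rowSpan, Submodule.mem_span_range_iff_exists_fun] at hwmem
    obtain ⟨d, hd⟩ := hwmem
    have hud : uvec G d = w := by rw [uvec_eq_sum]; exact hd
    have hmem2 : w ∈ rowSpan G := by rw [← hud]; exact uvec_mem G d
    have hwj : w j = ‖w‖ ^ 2 := by
      have := inner_eq_proj G j hmem2
      rw [real_inner_comm w (projVec G j), ← hw, real_inner_self_eq_norm_sq] at this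
      rw [← inner_single_left' j w, real_inner_comm]
      exact this
    have hnormpos : (0:ℝ) < ‖w‖ ^ 2 := pow_pos (norm_pos_iff.mpr h0) 2
    have hratio_d : ratio G j d = ‖w‖ ^ 2 := by
      rw [ratio, hud, sum_sq_eq_normSq, hwj]
      field_simp
    -- continuity of the ratio at `d`
    have hcont : ContinuousAt (fun c : Fin n → ℝ => ratio G j c) d := by
      have hc1 : ∀ jj : Fin m, Continuous fun c : Fin n → ℝ => uvec G c jj := by
        intro jj
        show Continuous fun c : Fin n → ℝ => ∑ i, c i * G i jj
        exact continuous_finset_sum _ fun i _ => (continuous_apply i).mul continuous_const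
      have hnum : Continuous fun c : Fin n → ℝ => (uvec G c j) ^ 2 := (hc1 j).pow 2
      have hden : Continuous fun c : Fin n → ℝ => ∑ jj, (uvec G c jj) ^ 2 :=
        continuous_finset_sum _ fun jj _ => (hc1 jj).pow 2
      apply hnum.continuousAt.div hden.continuousAt
      rw [hud, sum_sq_eq_normSq]
      exact ne_of_gt hnormpos
    refine ENNReal.le_of_forall_pos_le_add fun η hη _ => ?_
    have hη' : (0:ℝ) < η := hη
    rw [Metric.continuousAt_iff] at hcont
    obtain ⟨δ, hδ, hball⟩ := hcont η hη'
    -- pick a rational approximation of `d`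
    have hrat : ∀ i : Fin n, ∃ qi : ℚ, |d i - (qi:ℝ)| < δ := by
      intro i
      exact exists_rat_near (d i) hδ
    choose cq hcq using hrat
    have hdist : dist (fun i => (cq i : ℝ)) d < δ := by
      rw [dist_pi_lt_iff hδ]
      intro i
      rw [Real.dist_eq, abs_sub_comm]
      exact hcq i
    have hclose := hball hdist
    have hFc : ratio G j d - η ≤ ratio G j (fun i => (cq i : ℝ)) := by
      have := abs_lt.mp hclose
      rw [Real.dist_eq] at hclose
      have := abs_lt.mp hclose
      linarith [this.1]
    calc ENNReal.ofReal (projSq G j)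
        ≤ ENNReal.ofReal (ratio G j (fun i => (cq i : ℝ)) + η) := by
          apply ENNReal.ofReal_le_ofReal
          have : projSq G j = ratio G j d := by rw [projSq, ← hw, hratio_d]
          linarith [hFc, this.le]
      _ ≤ ENNReal.ofReal (ratio G j (fun i => (cq i : ℝ))) + ENNReal.ofReal η :=
          ENNReal.ofReal_add_le
      _ ≤ fE j G + η := by
          gcongr
          · exact le_iSup (fun c : Fin n → ℚ => ENNReal.ofReal (ratio G j fun i => (c i : ℝ))) cq
          · exact le_of_eq ENNReal.ofReal_coe_nnreal

set_option maxHeartbeats 1000000 in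
lemma sum_projSq_le (G : Fin n → Fin m → ℝ) :
    ∑ j, projSq G j ≤ (n : ℝ) := by
  classical
  set K := rowSpan G with hK
  have : FiniteDimensional ℝ K := inferInstance
  set b := stdOrthonormalBasis ℝ K with hb
  have key : ∀ j : Fin m, projSq G j = ∑ k, ((b k : EuclideanSpace ℝ (Fin m)) j) ^ 2 := by
    intro j
    set W := K.orthogonalProjectionOnto (EuclideanSpace.single j (1:ℝ)) with hWdef
    have hbkW : ∀ k, (inner ℝ (b k) W : ℝ) = (b k : EuclideanSpace ℝ (Fin m)) j := by
      intro k
      have h1 : (inner ℝ (b k) W : ℝ)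
          = (inner ℝ ((b k : EuclideanSpace ℝ (Fin m))) ((W : EuclideanSpace ℝ (Fin m))) : ℝ) :=
        rfl
      have h2 : (inner ℝ ((b k : EuclideanSpace ℝ (Fin m))) ((W : EuclideanSpace ℝ (Fin m))) : ℝ)
          = inner ℝ ((b k : EuclideanSpace ℝ (Fin m))) (EuclideanSpace.single j (1:ℝ)) :=
        (inner_eq_proj G j (SetLike.coe_mem _)).symm
      have h3 : (inner ℝ ((b k : EuclideanSpace ℝ (Fin m))) (EuclideanSpace.single j (1:ℝ)) : ℝ)
          = (b k : EuclideanSpace ℝ (Fin m)) j := by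
        rw [real_inner_comm]; exact inner_single_left' j _
      rw [h1, h2, h3]
    have hW : projSq G j = (inner ℝ W W : ℝ) := by
      have h4 : (inner ℝ W W : ℝ) = ‖W‖ ^ 2 := real_inner_self_eq_norm_sq W
      rw [projSq, projVec, ← hWdef, h4, Submodule.norm_coe]
    rw [hW, ← (b.sum_inner_mul_inner W W)]
    refine Finset.sum_congr rfl fun k _ => ?_
    rw [← hbkW k, sq, real_inner_comm W (b k)]
  have hcol : ∀ k, ∑ j : Fin m, ((b k : EuclideanSpace ℝ (Fin m)) j) ^ 2 = 1 := by
    intro k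
    rw [sum_sq_eq_normSq, Submodule.norm_coe, b.orthonormal.1 k, one_pow]
  calc ∑ j, projSq G j = ∑ j : Fin m, ∑ k, ((b k : EuclideanSpace ℝ (Fin m)) j) ^ 2 :=
        Finset.sum_congr rfl fun j _ => key j
    _ = ∑ k, ∑ j : Fin m, ((b k : EuclideanSpace ℝ (Fin m)) j) ^ 2 := Finset.sum_comm
    _ = ∑ _k : Fin (Module.finrank ℝ K), (1:ℝ) := Finset.sum_congr rfl fun k _ => hcol k
    _ = (Module.finrank ℝ K : ℝ) := by simp
    _ ≤ (n : ℝ) := by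
        have h := finrank_range_le_card (R := ℝ) (fun i => (WithLp.toLp 2 (G i) : EuclideanSpace ℝ (Fin m)))
        have h2 : Module.finrank ℝ K ≤ n := by rw [hK, rowSpan]; simpa [Set.finrank] using h
        exact_mod_cast h2


instance inst_s5 : IsProbabilityMeasure (gaussMatrix n m) := by
  unfold gaussMatrix; infer_instance

lemma measurable_fE (j : Fin m) : Measurable (fE (n := n) j) := by
  apply Measurable.iSup
  intro c
  apply ENNReal.measurable_ofReal.comp
  have hu : ∀ jj : Fin m, Measurable fun G : Fin n → Fin m → ℝ => uvec G (fun i => (c i : ℝ)) jj := by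
    intro jj
    show Measurable fun G : Fin n → Fin m → ℝ => ∑ i, (c i : ℝ) * G i jj
    apply Finset.measurable_sum
    intro i _
    exact (measurable_const.mul ((measurable_pi_apply jj).comp (measurable_pi_apply i)))
  exact ((hu j).pow_const 2).div (Finset.measurable_sum _ fun jj _ => (hu jj).pow_const 2)

lemma ratio_perm (G : Fin n → Fin m → ℝ) (τ : Equiv.Perm (Fin m)) (j : Fin m) (c : Fin n → ℝ) :
    ratio (fun i => G i ∘ τ) j c = ratio G (τ j) c := by
  have huv : ∀ jj, uvec (fun i => G i ∘ τ) c jj = uvec G c (τ jj) := by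
    intro jj; rfl
  rw [ratio, ratio, huv]
  congr 1
  rw [Finset.sum_congr rfl fun jj _ => by rw [huv jj]]
  exact Equiv.sum_comp τ fun jj => (uvec G c jj) ^ 2

lemma fE_perm (G : Fin n → Fin m → ℝ) (τ : Equiv.Perm (Fin m)) (j : Fin m) :
    fE j (fun i => G i ∘ τ) = fE (τ j) G := by
  unfold fE
  exact iSup_congr fun c => by rw [ratio_perm]

lemma measurePreserving_comp_perm (τ : Equiv.Perm (Fin m)) :
    MeasurePreserving (fun G : Fin n → Fin m → ℝ => fun i => G i ∘ τ)
      (gaussMatrix n m) (gaussMatrix n m) := by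
  have hS : MeasurePreserving (fun x : Fin m → ℝ => x ∘ τ)
      (Measure.pi fun _ => gaussianReal 0 1) (Measure.pi fun _ => gaussianReal 0 1) := by
    have h := MeasureTheory.measurePreserving_piCongrLeft
      (fun _ : Fin m => gaussianReal (0:ℝ) 1) τ.symm
    have heq : ⇑(MeasurableEquiv.piCongrLeft (fun _ : Fin m => ℝ) τ.symm)
        = fun x : Fin m → ℝ => x ∘ τ := by
      funext x
      funext b
      simp [MeasurableEquiv.coe_piCongrLeft, eq_rec_constant, Equiv.piCongrLeft_apply]
    rw [heq] at h
    exact h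
  exact measurePreserving_pi _ _ fun _ => hS

lemma lintegral_fE_eq (j : Fin m) (hm : 0 < m) :
    ∫⁻ G, fE (n := n) j G ∂(gaussMatrix n m)
      = ∫⁻ G, fE (n := n) (⟨0, hm⟩ : Fin m) G ∂(gaussMatrix n m) := by
  set j0 : Fin m := ⟨0, hm⟩
  have hT := measurePreserving_comp_perm (n := n) (Equiv.swap j0 j)
  have h := hT.lintegral_comp (measurable_fE j0)
  have hpt : ∀ G : Fin n → Fin m → ℝ, fE j0 (fun i => G i ∘ (Equiv.swap j0 j)) = fE j G := by
    intro G
    rw [fE_perm, Equiv.swap_apply_left]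
  calc ∫⁻ G, fE j G ∂(gaussMatrix n m)
      = ∫⁻ G, fE j0 (fun i => G i ∘ (Equiv.swap j0 j)) ∂(gaussMatrix n m) := by
        exact (lintegral_congr fun G => (hpt G).symm)
    _ = ∫⁻ G, fE j0 G ∂(gaussMatrix n m) := h

lemma lintegral_fE_le (hm : 0 < m) :
    ∫⁻ G, fE (n := n) (⟨0, hm⟩ : Fin m) G ∂(gaussMatrix n m) ≤ (n : ℝ≥0∞) / (m : ℝ≥0∞) := by
  set j0 : Fin m := ⟨0, hm⟩
  set I := ∫⁻ G, fE (n := n) j0 G ∂(gaussMatrix n m) with hI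
  have hm0 : (m : ℝ≥0∞) ≠ 0 := Nat.cast_ne_zero.mpr hm.ne'
  rw [ENNReal.le_div_iff_mul_le (Or.inl hm0) (Or.inl (ENNReal.natCast_ne_top m))]
  have hsum : ∑ j : Fin m, ∫⁻ G, fE (n := n) j G ∂(gaussMatrix n m) = I * m := by
    rw [Finset.sum_congr rfl fun j _ => lintegral_fE_eq j hm]
    simp [Finset.sum_const, mul_comm]
    rfl
  have hsum2 : ∑ j : Fin m, ∫⁻ G, fE (n := n) j G ∂(gaussMatrix n m)
      = ∫⁻ G, ∑ j : Fin m, fE (n := n) j G ∂(gaussMatrix n m) :=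
    (lintegral_finset_sum _ fun j _ => measurable_fE j).symm
  have hbound : ∀ G : Fin n → Fin m → ℝ, ∑ j : Fin m, fE (n := n) j G ≤ (n : ℝ≥0∞) := by
    intro G
    calc ∑ j : Fin m, fE (n := n) j G
        ≤ ∑ j : Fin m, ENNReal.ofReal (projSq G j) :=
          Finset.sum_le_sum fun j _ => fE_le G j
      _ = ENNReal.ofReal (∑ j, projSq G j) :=
          (ENNReal.ofReal_sum_of_nonneg fun j _ => by exact pow_nonneg (norm_nonneg _) 2).symm
      _ ≤ ENNReal.ofReal (n : ℝ) := ENNReal.ofReal_le_ofReal (sum_projSq_le G)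
      _ = (n : ℝ≥0∞) := ENNReal.ofReal_natCast n
  calc I * m = ∑ j : Fin m, ∫⁻ G, fE (n := n) j G ∂(gaussMatrix n m) := hsum.symm
    _ = ∫⁻ G, ∑ j : Fin m, fE (n := n) j G ∂(gaussMatrix n m) := hsum2
    _ ≤ ∫⁻ _G, (n : ℝ≥0∞) ∂(gaussMatrix n m) := lintegral_mono hbound
    _ = (n : ℝ≥0∞) := by simp


lemma measure_good_ge (hm : 0 < m) (hn : 1 ≤ n) {ε : ℝ} (hε : 0 < ε) :
    ENNReal.ofReal (1 - ε) ≤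
      gaussMatrix n m {G | projSq G ⟨0, hm⟩ < (n : ℝ) / (ε * m)} := by
  set j0 : Fin m := ⟨0, hm⟩
  set μ := gaussMatrix n m
  have htreal : (0:ℝ) < (n : ℝ) / (ε * m) := by
    have hn' : (0:ℝ) < n := by exact_mod_cast hn
    have hm' : (0:ℝ) < m := by exact_mod_cast hm
    positivity
  set t := ENNReal.ofReal ((n : ℝ) / (ε * m)) with htdef
  have ht0 : t ≠ 0 := (ENNReal.ofReal_pos.mpr htreal).ne'
  have httop : t ≠ ⊤ := ENNReal.ofReal_ne_top
  have hMarkov := meas_ge_le_lintegral_div (μ := μ) (measurable_fE (n := n) j0).aemeasurable ht0 httop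
  have hIle : (∫⁻ G, fE (n := n) j0 G ∂μ) / t ≤ ENNReal.ofReal ε := by
    have h1 : (∫⁻ G, fE (n := n) j0 G ∂μ) / t ≤ ((n : ℝ≥0∞) / (m : ℝ≥0∞)) / t := by
      gcongr
      exact lintegral_fE_le hm
    refine h1.trans ?_
    rw [ENNReal.div_le_iff_le_mul (Or.inl ht0) (Or.inl httop)]
    have h2 : ENNReal.ofReal ε * t = ENNReal.ofReal (ε * ((n : ℝ) / (ε * m))) := by
      rw [ENNReal.ofReal_mul hε.le]
    have h3 : ε * ((n : ℝ) / (ε * m)) = (n : ℝ) / m := by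
      have hm' : (m:ℝ) ≠ 0 := by exact_mod_cast hm.ne'
      field_simp
    have h4 : ENNReal.ofReal ((n : ℝ) / m) = (n : ℝ≥0∞) / (m : ℝ≥0∞) := by
      rw [ENNReal.ofReal_div_of_pos (by exact_mod_cast hm), ENNReal.ofReal_natCast,
        ENNReal.ofReal_natCast]
    rw [h2, h3, h4]
  have hge : μ {G | t ≤ fE (n := n) j0 G} ≤ ENNReal.ofReal ε := hMarkov.trans hIle
  have hmeasge : MeasurableSet {G : Fin n → Fin m → ℝ | t ≤ fE (n := n) j0 G} :=
    measurableSet_le measurable_const (measurable_fE j0)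
  have hcompl : μ {G : Fin n → Fin m → ℝ | t ≤ fE (n := n) j0 G}ᶜ
      = 1 - μ {G : Fin n → Fin m → ℝ | t ≤ fE (n := n) j0 G} :=
    prob_compl_eq_one_sub hmeasge
  have hlt : ENNReal.ofReal (1 - ε) ≤ μ {G : Fin n → Fin m → ℝ | t ≤ fE (n := n) j0 G}ᶜ := by
    rw [hcompl]
    calc ENNReal.ofReal (1 - ε) = 1 - ENNReal.ofReal ε := by
          rw [ENNReal.ofReal_sub _ hε.le, ENNReal.ofReal_one]
      _ ≤ 1 - μ {G : Fin n → Fin m → ℝ | t ≤ fE (n := n) j0 G} := tsub_le_tsub_left hge 1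
  refine hlt.trans (measure_mono ?_)
  intro G hG
  simp only [Set.mem_compl_iff, Set.mem_setOf_eq, not_le] at hG
  have h5 : ENNReal.ofReal (projSq G j0) < t := lt_of_le_of_lt (ofReal_projSq_le_fE G j0) hG
  exact (ENNReal.ofReal_lt_ofReal_iff htreal).mp h5

lemma holder_sum {p : ℝ} (hp1 : 1 ≤ p) (hp2 : p ≤ 2) (hm : 0 < m) (y : Fin m → ℝ) :
    ∑ i, |y i| ^ p ≤ (m : ℝ) ^ (1 - p / 2) * (∑ i, (y i) ^ 2) ^ (p / 2) := by
  have hp0 : 0 < p := lt_of_lt_of_le one_pos hp1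
  have hm' : (0:ℝ) < m := by exact_mod_cast hm
  have hq1 : 1 ≤ 2 / p := by
    rw [le_div_iff₀ hp0]
    linarith
  have h := Real.arith_mean_le_rpow_mean Finset.univ (fun _ : Fin m => 1 / m)
    (fun i => |y i| ^ p) (fun i _ => by positivity)
    (by
      rw [Finset.sum_const, Finset.card_univ, Fintype.card_fin, nsmul_eq_mul]
      field_simp)
    (fun i _ => by positivity) hq1
  have hzz : ∀ i : Fin m, (|y i| ^ p) ^ (2 / p) = (y i) ^ 2 := by
    intro i
    rw [← Real.rpow_mul (abs_nonneg _)]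
    have hpp : p * (2 / p) = 2 := by field_simp
    rw [hpp, Real.rpow_two, sq_abs]
  have hLHS : ∑ i ∈ Finset.univ, (1 / (m:ℝ)) * |y i| ^ p = (1 / m) * ∑ i, |y i| ^ p := by
    rw [Finset.mul_sum]
  have hRHS : (∑ i ∈ Finset.univ, (1 / (m:ℝ)) * (|y i| ^ p) ^ (2 / p)) ^ (1 / (2 / p))
      = ((1 / m) * ∑ i, (y i) ^ 2) ^ (p / 2) := by
    rw [one_div_div]
    congr 1
    rw [Finset.sum_congr rfl fun i _ => by rw [hzz i]]
    rw [Finset.mul_sum]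
  rw [hLHS, hRHS] at h
  have hsumsq : (0:ℝ) ≤ ∑ i, (y i) ^ 2 := Finset.sum_nonneg fun i _ => sq_nonneg _
  have hmul : ((1 / (m:ℝ)) * ∑ i, (y i) ^ 2) ^ (p / 2)
      = (1 / m) ^ (p / 2) * (∑ i, (y i) ^ 2) ^ (p / 2) :=
    Real.mul_rpow (by positivity) hsumsq
  rw [hmul] at h
  have hfinal : (m:ℝ) * ((1 / m) ^ (p / 2) * (∑ i, (y i) ^ 2) ^ (p / 2))
      = (m : ℝ) ^ (1 - p / 2) * (∑ i, (y i) ^ 2) ^ (p / 2) := by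
    rw [← mul_assoc]
    congr 1
    have h5 : ((1:ℝ)/m) ^ (p/2) = (m:ℝ) ^ (-(p/2)) := by
      rw [one_div, ← Real.rpow_neg_one (m:ℝ), ← Real.rpow_mul hm'.le, neg_one_mul]
    rw [h5, Real.rpow_sub hm', Real.rpow_one, Real.rpow_neg hm'.le]
    exact (div_eq_mul_inv _ _).symm
  calc ∑ i, |y i| ^ p = (m:ℝ) * ((1/(m:ℝ)) * ∑ i, |y i| ^ p) := by field_simp
    _ ≤ (m:ℝ) * ((1 / m) ^ (p / 2) * (∑ i, (y i) ^ 2) ^ (p / 2)) := by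
        apply mul_le_mul_of_nonneg_left h hm'.le
    _ = (m : ℝ) ^ (1 - p / 2) * (∑ i, (y i) ^ 2) ^ (p / 2) := hfinal

lemma one_add_rpow {x p : ℝ} (hx : 0 ≤ x) (hp : 1 ≤ p) : 1 + x ^ p ≤ (1 + x) ^ p := by
  have h := NNReal.add_rpow_le_rpow_add (1 : ℝ≥0) x.toNNReal hp
  have h' := NNReal.coe_le_coe.mpr h
  push_cast at h'
  rw [Real.coe_toNNReal _ hx] at h'
  simpa using h'


lemma pow_trans_aux {s c : ℝ} (hs : 0 < s) (hm' : 0 < (m:ℝ)) {p : ℝ} (hp0 : 0 < p)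
    (hc : 0 ≤ c) (h : c ≤ s ^ 2 * (m:ℝ) ^ (1 - 2 / p)) :
    c ^ (p / 2) * (m:ℝ) ^ (1 - p / 2) ≤ s ^ p := by
  have h1 : c ^ (p / 2) ≤ (s ^ 2 * (m:ℝ) ^ (1 - 2 / p)) ^ (p / 2) :=
    Real.rpow_le_rpow hc h (by positivity)
  have h2 : (s ^ 2 * (m:ℝ) ^ (1 - 2 / p)) ^ (p / 2)
      = s ^ p * (m:ℝ) ^ ((1 - 2 / p) * (p / 2)) := by
    rw [Real.mul_rpow (by positivity) (by positivity)]
    congr 1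
    · rw [← Real.rpow_two s, ← Real.rpow_mul hs.le]
      congr 1
      field_simp
    · rw [← Real.rpow_mul hm'.le]
  calc c ^ (p / 2) * (m:ℝ) ^ (1 - p / 2)
      ≤ (s ^ 2 * (m:ℝ) ^ (1 - 2 / p)) ^ (p / 2) * (m:ℝ) ^ (1 - p / 2) := by
        apply mul_le_mul_of_nonneg_right h1 (by positivity)
    _ = s ^ p * ((m:ℝ) ^ ((1 - 2 / p) * (p / 2)) * (m:ℝ) ^ (1 - p / 2)) := by
        rw [h2, mul_assoc]
    _ = s ^ p := by
        rw [← Real.rpow_add hm']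
        have : (1 - 2 / p) * (p / 2) + (1 - p / 2) = 0 := by
          field_simp
          ring
        rw [this, Real.rpow_zero, mul_one]

lemma bddAbove_ell {p : ℝ} (hp0 : 0 < p) (σ : ℕ → ℝ)
    (hσpos : ∀ j : ℕ, 1 ≤ j → j ≤ m → 0 < σ j) (S : Set (Fin m → ℝ))
    (hS : ∀ x ∈ S, memEllR p σ x) : BddAbove (l2norm '' S) := by
  refine ⟨Real.sqrt (∑ i : Fin m, σ ((i:ℕ)+1) ^ 2), ?_⟩
  rintro r ⟨x, hx, rfl⟩
  have hmem := hS x hx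
  have hterm : ∀ i : Fin m, |x i| ≤ σ ((i:ℕ)+1) := by
    intro i
    have hσi : 0 < σ ((i:ℕ)+1) := hσpos _ (Nat.le_add_left 1 i) (by omega)
    have hnn : ∀ j : Fin m, 0 ≤ |x j| ^ p / σ ((j:ℕ)+1) ^ p := fun j =>
      div_nonneg (Real.rpow_nonneg (abs_nonneg _) _)
        (Real.rpow_nonneg (hσpos _ (Nat.le_add_left 1 j) (by omega)).le _)
    have hle1 : |x i| ^ p / σ ((i:ℕ)+1) ^ p ≤ 1 :=
      le_trans (Finset.single_le_sum (fun j _ => hnn j) (Finset.mem_univ i)) hmem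
    by_contra hcon
    push_neg at hcon
    have h2 : σ ((i:ℕ)+1) ^ p < |x i| ^ p := Real.rpow_lt_rpow hσi.le hcon hp0
    have h3 : (0:ℝ) < σ ((i:ℕ)+1) ^ p := Real.rpow_pos_of_pos hσi p
    rw [div_le_one h3] at hle1
    linarith
  unfold l2norm
  apply Real.sqrt_le_sqrt
  apply Finset.sum_le_sum
  intro i _
  calc (x i) ^ 2 = |x i| ^ 2 := (sq_abs _).symm
    _ ≤ σ ((i:ℕ)+1) ^ 2 := by
        apply pow_le_pow_left₀ (abs_nonneg _) (hterm i)


lemma projVec_apply_self (G : Fin n → Fin m → ℝ) (j : Fin m) :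
    projVec G j j = projSq G j := by
  have hmem : projVec G j ∈ rowSpan G := SetLike.coe_mem _
  have h := inner_eq_proj G j hmem
  have h2 : (inner ℝ (EuclideanSpace.single j (1:ℝ)) (projVec G j) : ℝ) = projSq G j := by
    rw [real_inner_comm, h, real_inner_self_eq_norm_sq]
    rfl
  rw [← inner_single_left' j (projVec G j), h2]

lemma case_one {p : ℝ} (hp1 : 1 < p) (hp2 : p ≤ 2) (σ : ℕ → ℝ)
    (hσpos : ∀ j : ℕ, 1 ≤ j → j ≤ m → 0 < σ j)
    (hσmono : ∀ i j : ℕ, 1 ≤ i → i ≤ j → j ≤ m → σ j ≤ σ i)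
    (hnm : n < m) (hm1 : 0 < m)
    (hbig : 1 ≤ σ m ^ 2 * (m:ℝ) ^ (1 - 2 / p))
    (G : Fin n → Fin m → ℝ) :
    σ 1 / (1 + σ 1) ≤
      sSup (l2norm '' {x : Fin m → ℝ | memEllR p σ x ∧ ∀ i, ∑ j, G i j * x j = 0}) := by
  have hp0 : (0:ℝ) < p := lt_trans one_pos hp1
  have hm' : (0:ℝ) < m := by exact_mod_cast hm1
  have hσm : 0 < σ m := hσpos m hm1 le_rfl
  have hσ1 : 0 < σ 1 := hσpos 1 le_rfl hm1
  -- a nonzero kernel vector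
  set L : (Fin m → ℝ) →ₗ[ℝ] (Fin n → ℝ) := Matrix.mulVecLin (Matrix.of G) with hL
  have hker : LinearMap.ker L ≠ ⊥ := by
    intro hbot
    have hinj : Function.Injective L := LinearMap.ker_eq_bot.mp hbot
    have hle := LinearMap.finrank_le_finrank_of_injective hinj
    rw [Module.finrank_pi ℝ, Module.finrank_pi ℝ] at hle
    simp only [Fintype.card_fin] at hle
    omega
  obtain ⟨x, hxker, hx0⟩ := (Submodule.ne_bot_iff _).mp hker
  have hLx : ∀ i, ∑ j, G i j * x j = 0 := by
    intro i
    have : L x = 0 := hxker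
    have h2 := congrFun this i
    simpa [hL, Matrix.mulVecLin_apply, Matrix.mulVec, dotProduct] using h2
  have hsumpos : 0 < ∑ i, (x i) ^ 2 := by
    obtain ⟨i, hi⟩ := Function.ne_iff.mp hx0
    apply Finset.sum_pos' (fun j _ => sq_nonneg _)
    exact ⟨i, Finset.mem_univ i, pow_two_pos_of_ne_zero hi⟩
  set s := l2norm x with hs
  have hspos : 0 < s := Real.sqrt_pos.mpr hsumpos
  set x1 : Fin m → ℝ := fun j => x j / s with hx1
  have hx1sq : ∑ i, (x1 i) ^ 2 = 1 := by
    have : ∑ i, (x1 i) ^ 2 = (∑ i, (x i) ^ 2) / s ^ 2 := by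
      rw [Finset.sum_div]
      exact Finset.sum_congr rfl fun i _ => by rw [div_pow]
    rw [this, hs, l2norm, Real.sq_sqrt hsumpos.le]
    field_simp
  have hker1 : ∀ i, ∑ j, G i j * x1 j = 0 := by
    intro i
    have : ∑ j, G i j * x1 j = (∑ j, G i j * x j) / s := by
      rw [Finset.sum_div]
      exact Finset.sum_congr rfl fun j _ => by rw [hx1]; ring
    rw [this, hLx i, zero_div]
  have hmem : memEllR p σ x1 := by
    unfold memEllR
    have hterm : ∀ i : Fin m, |x1 i| ^ p / σ ((i:ℕ)+1) ^ p ≤ |x1 i| ^ p / σ m ^ p := by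
      intro i
      have hσi : 0 < σ ((i:ℕ)+1) := hσpos _ (Nat.le_add_left 1 i) (by omega)
      apply div_le_div_of_nonneg_left (Real.rpow_nonneg (abs_nonneg _) _)
        (Real.rpow_pos_of_pos hσm p)
      exact Real.rpow_le_rpow hσm.le (hσmono _ m (Nat.le_add_left 1 i) (by omega) le_rfl) hp0.le
    calc ∑ i : Fin m, |x1 i| ^ p / σ ((i:ℕ)+1) ^ p
        ≤ ∑ i : Fin m, |x1 i| ^ p / σ m ^ p := Finset.sum_le_sum fun i _ => hterm i
      _ = (∑ i, |x1 i| ^ p) / σ m ^ p := by rw [Finset.sum_div]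
      _ ≤ ((m:ℝ) ^ (1 - p/2) * (∑ i, (x1 i) ^ 2) ^ (p/2)) / σ m ^ p := by
          gcongr
          exact holder_sum hp1.le hp2 hm1 x1
      _ = (m:ℝ) ^ (1 - p/2) / σ m ^ p := by rw [hx1sq, Real.one_rpow, mul_one]
      _ ≤ 1 := by
          rw [div_le_one (Real.rpow_pos_of_pos hσm p)]
          have h := pow_trans_aux (m := m) hσm hm' hp0 zero_le_one hbig
          rwa [Real.one_rpow, one_mul] at h
  have hl2 : l2norm x1 = 1 := by rw [l2norm, hx1sq, Real.sqrt_one]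
  have ha1 : σ 1 / (1 + σ 1) ≤ 1 := by
    rw [div_le_one (by linarith)]
    linarith
  have hbdd := bddAbove_ell hp0 σ hσpos
    {x : Fin m → ℝ | memEllR p σ x ∧ ∀ i, ∑ j, G i j * x j = 0} (fun y hy => hy.1)
  have hmem2 : l2norm x1 ∈ l2norm '' {x : Fin m → ℝ | memEllR p σ x ∧ ∀ i, ∑ j, G i j * x j = 0} :=
    Set.mem_image_of_mem _ ⟨hmem, hker1⟩
  calc σ 1 / (1 + σ 1) ≤ 1 := ha1
    _ = l2norm x1 := hl2.symm
    _ ≤ sSup (l2norm '' {x : Fin m → ℝ | memEllR p σ x ∧ ∀ i, ∑ j, G i j * x j = 0}) :=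
        le_csSup hbdd hmem2


set_option maxHeartbeats 1000000 in
lemma construction {p : ℝ} (hp1 : 1 < p) (hp2 : p ≤ 2) (σ : ℕ → ℝ)
    (hσpos : ∀ j : ℕ, 1 ≤ j → j ≤ m → 0 < σ j)
    (hσmono : ∀ i j : ℕ, 1 ≤ i → i ≤ j → j ≤ m → σ j ≤ σ i)
    (hm1 : 0 < m)
    (G : Fin n → Fin m → ℝ)
    (hb2B : projSq G ⟨0, hm1⟩ ≤ σ m ^ 2 * (m:ℝ) ^ (1 - 2 / p))
    (hb2lt1 : projSq G ⟨0, hm1⟩ < 1) :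
    σ 1 / (1 + σ 1) ≤
      sSup (l2norm '' {x : Fin m → ℝ | memEllR p σ x ∧ ∀ i, ∑ j, G i j * x j = 0}) := by
  have hp0 : (0:ℝ) < p := lt_trans one_pos hp1
  have hm' : (0:ℝ) < m := by exact_mod_cast hm1
  have hσm : 0 < σ m := hσpos m hm1 le_rfl
  have hσ1 : 0 < σ 1 := hσpos 1 le_rfl hm1
  set j0 : Fin m := ⟨0, hm1⟩ with hj0
  set w : EuclideanSpace ℝ (Fin m) := projVec G j0 with hw
  set b2 : ℝ := projSq G j0 with hb2def
  have hb2nonneg : 0 ≤ b2 := pow_nonneg (norm_nonneg _) 2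
  have hwj0 : w j0 = b2 := projVec_apply_self G j0
  have hwnormsq : ‖w‖ ^ 2 = b2 := rfl
  set v : EuclideanSpace ℝ (Fin m) := EuclideanSpace.single j0 (1:ℝ) - w with hv
  have hvj0 : v j0 = 1 - b2 := by
    rw [hv, PiLp.sub_apply, EuclideanSpace.single_apply, hwj0]
    simp
  have hvne : ∀ j : Fin m, j ≠ j0 → v j = - w j := by
    intro j hj
    rw [hv, PiLp.sub_apply, EuclideanSpace.single_apply]
    simp [hj]
  have hnv : ‖v‖ ^ 2 = 1 - b2 := by
    rw [hv, norm_sub_sq_real, EuclideanSpace.norm_single, inner_single_left' j0 w, hwj0,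
      hwnormsq, norm_one]
    ring
  have hspos : 0 < 1 - b2 := by linarith
  set a : ℝ := σ 1 / (1 + σ 1) with ha
  have h1σ : (0:ℝ) < 1 + σ 1 := by linarith
  have hapos : 0 < a := div_pos hσ1 h1σ
  set t : ℝ := a / Real.sqrt (1 - b2) with ht
  have hsqrtpos : 0 < Real.sqrt (1 - b2) := Real.sqrt_pos.mpr hspos
  have htpos : 0 < t := div_pos hapos hsqrtpos
  set x : Fin m → ℝ := fun j => t * v j with hx
  -- kernel property
  have hker : ∀ i, ∑ j, G i j * x j = 0 := by
    intro i
    have hvK : v ∈ (rowSpan G)ᗮ := by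
      rw [hv, hw]
      exact Submodule.sub_starProjection_mem_orthogonal (K := rowSpan G) _
    have hrow : (WithLp.toLp 2 (G i) : EuclideanSpace ℝ (Fin m)) ∈ rowSpan G := Submodule.subset_span ⟨i, rfl⟩
    have hinner := (Submodule.mem_orthogonal _ _).mp hvK (WithLp.toLp 2 (G i)) hrow
    have hsum0 : ∑ j, G i j * v j = 0 := by
      simpa [PiLp.inner_apply, RCLike.inner_apply, mul_comm] using hinner
    calc ∑ j, G i j * x j = t * ∑ j, G i j * v j := by
          rw [Finset.mul_sum]
          exact Finset.sum_congr rfl fun j _ => by rw [hx]; ring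
      _ = 0 := by rw [hsum0, mul_zero]
  -- norm facts
  have hts : t ^ 2 * (1 - b2) = a ^ 2 := by
    rw [ht, div_pow, Real.sq_sqrt hspos.le]
    field_simp
  have hxsum : ∑ j, (x j) ^ 2 = a ^ 2 := by
    have h1 : ∑ j, (x j) ^ 2 = t ^ 2 * ∑ j, (v j) ^ 2 := by
      rw [Finset.mul_sum]
      exact Finset.sum_congr rfl fun j _ => by rw [hx]; ring
    rw [h1, sum_sq_eq_normSq, hnv, hts]
  have hl2x : l2norm x = a := by
    rw [l2norm, hxsum, Real.sqrt_sq hapos.le]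
  -- head coordinate
  have hxj0 : x j0 = a * Real.sqrt (1 - b2) := by
    have h1 : x j0 = t * (1 - b2) := by rw [hx]; simp only [hvj0]
    rw [h1, ht, div_mul_eq_mul_div, div_eq_iff (ne_of_gt hsqrtpos)]
    linear_combination (-a) * Real.mul_self_sqrt hspos.le
  -- tail sum of squares
  have htail_sq : ∑ j ∈ Finset.univ.erase j0, (x j) ^ 2 = a ^ 2 * b2 := by
    have h1 : ∑ j ∈ Finset.univ.erase j0, (x j) ^ 2 = (∑ j, (x j) ^ 2) - (x j0) ^ 2 := by
      rw [← Finset.add_sum_erase Finset.univ (fun j => (x j) ^ 2) (Finset.mem_univ j0)]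
      ring
    rw [h1, hxsum, hxj0]
    rw [mul_pow, Real.sq_sqrt hspos.le]
    ring
  -- membership
  have hmem : memEllR p σ x := by
    unfold memEllR
    rw [← Finset.add_sum_erase Finset.univ
      (fun i : Fin m => |x i| ^ p / σ ((i:ℕ)+1) ^ p) (Finset.mem_univ j0)]
    have hσ1p : (0:ℝ) < σ 1 ^ p := Real.rpow_pos_of_pos hσ1 p
    have hσmp : (0:ℝ) < σ m ^ p := Real.rpow_pos_of_pos hσm p
    have hap : (0:ℝ) < a ^ p := Real.rpow_pos_of_pos hapos p
    -- head bound
    have hhead : |x j0| ^ p / σ (((j0:ℕ))+1) ^ p ≤ a ^ p / σ 1 ^ p := by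
      have hj0c : ((j0:ℕ)) + 1 = 1 := rfl
      rw [hj0c]
      have hnum : |x j0| ^ p ≤ a ^ p := by
        rw [hxj0, abs_of_nonneg (by positivity)]
        rw [Real.mul_rpow hapos.le (Real.sqrt_nonneg _)]
        have hle1 : Real.sqrt (1 - b2) ^ p ≤ 1 :=
          Real.rpow_le_one (Real.sqrt_nonneg _)
            (Real.sqrt_le_one.mpr (by linarith)) hp0.le
        nlinarith [hap.le, Real.rpow_nonneg (Real.sqrt_nonneg (1 - b2)) p]
      rw [div_eq_mul_inv, div_eq_mul_inv]
      exact mul_le_mul_of_nonneg_right hnum (inv_nonneg.mpr hσ1p.le)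
    -- tail bound
    set y : Fin m → ℝ := fun j => if j = j0 then 0 else x j with hy
    have hysum : ∑ j ∈ Finset.univ.erase j0, |x j| ^ p = ∑ j, |y j| ^ p := by
      rw [← Finset.add_sum_erase Finset.univ (fun j => |y j| ^ p) (Finset.mem_univ j0)]
      have hy0 : |y j0| ^ p = 0 := by
        simp only [hy, if_pos rfl, abs_zero]
        exact Real.zero_rpow hp0.ne'
      rw [hy0, zero_add]
      refine Finset.sum_congr rfl fun j hj => ?_
      have : y j = x j := by simp [hy, (Finset.mem_erase.mp hj).1]
      rw [this]
    have hysq : ∑ j, (y j) ^ 2 = a ^ 2 * b2 := by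
      rw [← Finset.add_sum_erase Finset.univ (fun j => (y j) ^ 2) (Finset.mem_univ j0)]
      have hy0 : (y j0) ^ 2 = 0 := by simp [hy]
      rw [hy0, zero_add, ← htail_sq]
      refine Finset.sum_congr rfl fun j hj => ?_
      have : y j = x j := by simp [hy, (Finset.mem_erase.mp hj).1]
      rw [this]
    have hpowsplit : (a ^ 2 * b2) ^ (p/2) = a ^ p * b2 ^ (p/2) := by
      rw [Real.mul_rpow (sq_nonneg a) hb2nonneg]
      congr 1
      rw [← Real.rpow_two a, ← Real.rpow_mul hapos.le]
      congr 1
      ring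
    have htailkey : b2 ^ (p/2) * (m:ℝ) ^ (1 - p/2) ≤ σ m ^ p :=
      pow_trans_aux hσm hm' hp0 hb2nonneg hb2B
    have htail : ∑ j ∈ Finset.univ.erase j0, |x j| ^ p / σ ((j:ℕ)+1) ^ p ≤ a ^ p := by
      calc ∑ j ∈ Finset.univ.erase j0, |x j| ^ p / σ ((j:ℕ)+1) ^ p
          ≤ ∑ j ∈ Finset.univ.erase j0, |x j| ^ p / σ m ^ p := by
            refine Finset.sum_le_sum fun j _ => ?_
            apply div_le_div_of_nonneg_left (Real.rpow_nonneg (abs_nonneg _) _) hσmp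
            exact Real.rpow_le_rpow hσm.le
              (hσmono _ m (Nat.le_add_left 1 j) (by omega) le_rfl) hp0.le
        _ = (∑ j ∈ Finset.univ.erase j0, |x j| ^ p) / σ m ^ p := by rw [Finset.sum_div]
        _ = (∑ j, |y j| ^ p) / σ m ^ p := by rw [hysum]
        _ ≤ ((m:ℝ) ^ (1 - p/2) * (∑ j, (y j) ^ 2) ^ (p/2)) / σ m ^ p := by
            rw [div_eq_mul_inv, div_eq_mul_inv]
            exact mul_le_mul_of_nonneg_right (holder_sum hp1.le hp2 hm1 y)
              (inv_nonneg.mpr hσmp.le)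
        _ = a ^ p * (b2 ^ (p/2) * (m:ℝ) ^ (1 - p/2) / σ m ^ p) := by
            rw [hysq, hpowsplit]
            ring
        _ ≤ a ^ p * 1 := by
            apply mul_le_mul_of_nonneg_left _ hap.le
            rw [div_le_one hσmp]
            exact htailkey
        _ = a ^ p := mul_one _
    -- combine
    have hfinal : a ^ p / σ 1 ^ p + a ^ p ≤ 1 := by
      have hA : a ^ p = σ 1 ^ p / (1 + σ 1) ^ p := Real.div_rpow hσ1.le h1σ.le p
      have hBpos : (0:ℝ) < (1 + σ 1) ^ p := Real.rpow_pos_of_pos h1σ p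
      have hkey : 1 + σ 1 ^ p ≤ (1 + σ 1) ^ p := one_add_rpow hσ1.le hp1.le
      rw [hA]
      have he : σ 1 ^ p / (1 + σ 1) ^ p / σ 1 ^ p + σ 1 ^ p / (1 + σ 1) ^ p
          = (1 + σ 1 ^ p) / (1 + σ 1) ^ p := by
        field_simp
      rw [he, div_le_one hBpos]
      exact hkey
    calc |x j0| ^ p / σ (((j0:ℕ))+1) ^ p
          + ∑ j ∈ Finset.univ.erase j0, |x j| ^ p / σ ((j:ℕ)+1) ^ p
        ≤ a ^ p / σ 1 ^ p + a ^ p := add_le_add hhead htail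
      _ ≤ 1 := hfinal
  -- conclude
  have hbdd := bddAbove_ell hp0 σ hσpos
    {z : Fin m → ℝ | memEllR p σ z ∧ ∀ i, ∑ j, G i j * z j = 0} (fun z hz => hz.1)
  have hmem2 : l2norm x ∈ l2norm '' {z : Fin m → ℝ | memEllR p σ z ∧ ∀ i, ∑ j, G i j * z j = 0} :=
    Set.mem_image_of_mem _ ⟨hmem, hker⟩
  calc σ 1 / (1 + σ 1) = l2norm x := hl2x.symm
    _ ≤ sSup (l2norm '' {z : Fin m → ℝ | memEllR p σ z ∧ ∀ i, ∑ j, G i j * z j = 0}) :=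
        le_csSup hbdd hmem2

end Stmt5Aux

open Stmt5Aux in
theorem stmt5 :
    ∀ p : ℝ, 1 < p → p ≤ 2 →
    ∀ ε : ℝ, 0 < ε → ε < 1 →
    ∀ (m : ℕ) (σ : ℕ → ℝ),
      (∀ j : ℕ, 1 ≤ j → j ≤ m → 0 < σ j) →
      (∀ i j : ℕ, 1 ≤ i → i ≤ j → j ≤ m → σ j ≤ σ i) →
    ∀ n : ℕ, 1 ≤ n → n < m →
    ∀ q : ℝ, 1 / p + 1 / q = 1 →
      (n : ℝ) ≤ ε * σ m ^ 2 * (m : ℝ) ^ (2 / q) →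
      ENNReal.ofReal (1 - ε) ≤
        gaussMatrix n m {G | σ 1 / (1 + σ 1) ≤
          sSup (l2norm '' {x : Fin m → ℝ |
            memEllR p σ x ∧ ∀ i, ∑ j, G i j * x j = 0})} := by
  intro p hp1 hp2 ε hε hε1 m σ hσpos hσmono n hn hnm q hq hcond
  have hm1 : 0 < m := by omega
  have hp0 : (0:ℝ) < p := by linarith
  have hm' : (0:ℝ) < m := by exact_mod_cast hm1
  have hσm : 0 < σ m := hσpos m hm1 le_rfl
  have hqne : q ≠ 0 := by
    intro h0
    rw [h0, div_zero, add_zero] at hq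
    have hpp : p = 1 := by
      field_simp at hq
      linarith
    linarith
  have h2q : 2 / q = 2 - 2 / p := by
    have hinvq : 1 / q = 1 - 1 / p := by linarith
    calc 2 / q = 2 * (1 / q) := by ring
      _ = 2 * (1 - 1 / p) := by rw [hinvq]
      _ = 2 - 2 / p := by ring
  have hsplit : (m:ℝ) ^ (2 / q) = (m:ℝ) * (m:ℝ) ^ (1 - 2 / p) := by
    rw [h2q]
    have h3 : (2 : ℝ) - 2 / p = 1 + (1 - 2 / p) := by ring
    rw [h3, Real.rpow_add hm', Real.rpow_one]
  have hcond' : (n:ℝ) / (ε * m) ≤ σ m ^ 2 * (m:ℝ) ^ (1 - 2 / p) := by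
    rw [div_le_iff₀ (by positivity)]
    calc (n:ℝ) ≤ ε * σ m ^ 2 * (m:ℝ) ^ (2 / q) := hcond
      _ = σ m ^ 2 * (m:ℝ) ^ (1 - 2 / p) * (ε * m) := by rw [hsplit]; ring
  by_cases hcase : 1 ≤ σ m ^ 2 * (m:ℝ) ^ (1 - 2 / p)
  · have hall : ∀ G : Fin n → Fin m → ℝ, σ 1 / (1 + σ 1) ≤
        sSup (l2norm '' {x : Fin m → ℝ | memEllR p σ x ∧ ∀ i, ∑ j, G i j * x j = 0}) :=
      fun G => case_one hp1 hp2 σ hσpos hσmono hnm hm1 hcase G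
    calc ENNReal.ofReal (1 - ε) ≤ 1 := ENNReal.ofReal_le_one.mpr (by linarith)
      _ = gaussMatrix n m Set.univ := measure_univ.symm
      _ ≤ _ := measure_mono fun G _ => hall G
  · push_neg at hcase
    have hgood := measure_good_ge (n := n) hm1 hn hε
    refine hgood.trans (measure_mono ?_)
    intro G hG
    simp only [Set.mem_setOf_eq] at hG ⊢
    have hb2B : projSq G ⟨0, hm1⟩ ≤ σ m ^ 2 * (m:ℝ) ^ (1 - 2 / p) :=
      le_of_lt (lt_of_lt_of_le hG hcond')
    exact construction hp1 hp2 σ hσpos hσmono hm1 G hb2B (lt_of_le_of_lt hb2B hcase)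
end
end

section
/- Let F and G be real vector spaces equipped with quasi-norms ‖·‖_F and ‖·‖_G, with quasi-triangle constants C_F ≥ 1 and C_G ≥ 1 respectively. Let S : F → G be a linear map with sup_{‖f‖_F ≤ 1} ‖S f‖_G < ∞, let n ∈ ℕ, let L₁, …, L_n : F → ℝ be linear functionals, and write N(f) = (L₁(f), …, L_n(f)) ∈ ℝⁿ. Then C_G^{−1} · sup{ ‖S f‖_G : ‖f‖_F ≤ 1, N(f) = 0 } ≤ inf_{φ : ℝⁿ → G} sup_{‖f‖_F ≤ 1} ‖S f − φ(N(f))‖_G ≤ 2·C_F · sup{ ‖S f‖_G : ‖f‖_F ≤ 1, N(f) = 0 }, where the infimum is over all (not necessarily linear or continuous) maps φ : ℝⁿ → G. -/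
noncomputable section

theorem stmt6 (F G : Type*) [AddCommGroup F] [Module ℝ F] [AddCommGroup G] [Module ℝ G]
    (nF : F → ℝ) (nG : G → ℝ) (CF CG : ℝ) (hCF : 1 ≤ CF) (hCG : 1 ≤ CG)
    -- `nF` is a quasi-norm on `F` with constant `C_F`:
    (hFnonneg : ∀ f, 0 ≤ nF f)
    (hFzero : ∀ f, nF f = 0 ↔ f = 0)
    (hFsmul : ∀ (c : ℝ) (f : F), nF (c • f) = |c| * nF f)
    (hFtri : ∀ f g : F, nF (f + g) ≤ CF * (nF f + nF g))
    -- `nG` is a quasi-norm on `G` with constant `C_G`: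
    (hGnonneg : ∀ g, 0 ≤ nG g)
    (hGzero : ∀ g, nG g = 0 ↔ g = 0)
    (hGsmul : ∀ (c : ℝ) (g : G), nG (c • g) = |c| * nG g)
    (hGtri : ∀ g g' : G, nG (g + g') ≤ CG * (nG g + nG g'))
    -- `S` is a bounded linear map:
    (S : F →ₗ[ℝ] G)
    (hS : ∃ M : ℝ, ∀ f : F, nF f ≤ 1 → nG (S f) ≤ M)
    -- the information map `N = (L₁, …, L_n)`:
    (n : ℕ) (L : Fin n → F →ₗ[ℝ] ℝ) :
    -- the radius of the trace of the unit ball on the kernel of the information map: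
    ∀ R : ℝ, R = sSup {r : ℝ | ∃ f : F, nF f ≤ 1 ∧ (∀ i, L i f = 0) ∧ r = nG (S f)} →
      -- lower bound: every worst-case-error bound `r` of any reconstruction map `φ`
      -- satisfies `C_G⁻¹ · R ≤ r`:
      (∀ φ : (Fin n → ℝ) → G, ∀ r : ℝ,
          (∀ f : F, nF f ≤ 1 → nG (S f - φ (fun i => L i f)) ≤ r) → CG⁻¹ * R ≤ r) ∧
      -- upper bound: some reconstruction map `φ` has worst-case error at most `2·C_F·R`:
      (∃ φ : (Fin n → ℝ) → G, ∀ f : F, nF f ≤ 1 →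
          nG (S f - φ (fun i => L i f)) ≤ 2 * CF * R) := by
  intro R hR
  have hCG0 : (0:ℝ) < CG := lt_of_lt_of_le one_pos hCG
  have hCF0 : (0:ℝ) < CF := lt_of_lt_of_le one_pos hCF
  set K : Set ℝ := {r : ℝ | ∃ f : F, nF f ≤ 1 ∧ (∀ i, L i f = 0) ∧ r = nG (S f)} with hK
  have hGneg : ∀ g : G, nG (-g) = nG g := by
    intro g
    have := hGsmul (-1) g
    simpa using this
  have hKbdd : BddAbove K := by
    obtain ⟨M, hM⟩ := hS
    exact ⟨M, fun r ⟨f, hf1, _, hf3⟩ => hf3 ▸ hM f hf1⟩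
  have h0K : (0:ℝ) ∈ K := by
    refine ⟨0, ?_, fun i => by simp, by simp [(hGzero 0).mpr rfl]⟩
    simp [(hFzero 0).mpr rfl]
  have hR0 : 0 ≤ R := hR ▸ le_csSup hKbdd h0K
  constructor
  · -- lower bound
    intro φ r hr
    have hr0 : 0 ≤ r := le_trans (hGnonneg _) (hr 0 (by simp [(hFzero 0).mpr rfl]))
    have key : ∀ s ∈ K, s ≤ CG * r := by
      rintro s ⟨f, hf1, hf2, rfl⟩
      have hnf : nF (-f) ≤ 1 := by
        have := hFsmul (-1) f
        simp only [neg_one_smul, abs_neg, abs_one, one_mul] at this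
        rw [this]; exact hf1
      have h1 := hr f hf1
      have h2 := hr (-f) hnf
      have heq : (fun i => L i (-f)) = (fun i => L i f) := by
        funext i; simp [hf2 i]
      rw [heq] at h2
      set a := φ (fun i => L i f) with ha
      have hsum : S f - a + -(S (-f) - a) = (2:ℝ) • S f := by
        rw [map_neg]
        abel_nf
        module
      have := hGtri (S f - a) (-(S (-f) - a))
      rw [hsum, hGneg, hGsmul] at this
      have h2le : 2 * nG (S f) ≤ CG * (r + r) := by
        calc 2 * nG (S f) = |(2:ℝ)| * nG (S f) := by norm_num
        _ ≤ CG * (nG (S f - a) + nG (S (-f) - a)) := this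
        _ ≤ CG * (r + r) := by
            apply mul_le_mul_of_nonneg_left (add_le_add h1 h2) (le_of_lt hCG0)
      nlinarith [hGnonneg (S f)]
    have hRle : R ≤ CG * r := hR ▸ csSup_le ⟨0, h0K⟩ key
    rw [inv_mul_le_iff₀ hCG0]
    linarith
  · -- upper bound
    classical
    refine ⟨fun a => if h : ∃ f : F, nF f ≤ 1 ∧ ∀ i, L i f = a i then S h.choose else 0, ?_⟩
    intro f hf
    have hex : ∃ f' : F, nF f' ≤ 1 ∧ ∀ i, L i f' = (fun i => L i f) i := ⟨f, hf, fun i => rfl⟩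
    beta_reduce
    rw [dif_pos hex]
    set f₀ := hex.choose with hf₀
    obtain ⟨hf₀1, hf₀2⟩ := hex.choose_spec
    set g := f - f₀ with hg
    have hLg : ∀ i, L i g = 0 := by
      intro i; simp [hg, map_sub, hf₀, hf₀2 i]
    have hnFneg : nF (-f₀) = nF f₀ := by
      have := hFsmul (-1) f₀; simpa using this
    have hgF : nF g ≤ 2 * CF := by
      have := hFtri f (-f₀)
      rw [hnFneg] at this
      have : nF (f + -f₀) ≤ CF * 2 := le_trans this
        (mul_le_mul_of_nonneg_left (by linarith) (le_of_lt hCF0))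
      calc nF g = nF (f + -f₀) := by rw [hg, sub_eq_add_neg]
      _ ≤ CF * 2 := this
      _ = 2 * CF := by ring
    set c : ℝ := 2 * CF with hc
    have hc0 : 0 < c := by positivity
    set g' := c⁻¹ • g with hg'
    have hg'F : nF g' ≤ 1 := by
      rw [hg', hFsmul, abs_of_pos (inv_pos.mpr hc0)]
      rw [inv_mul_le_iff₀ hc0]
      simpa using hgF
    have hLg' : ∀ i, L i g' = 0 := by
      intro i; rw [hg', map_smul, hLg i]; simp
    have hmem : nG (S g') ∈ K := ⟨g', hg'F, hLg', rfl⟩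
    have hle : nG (S g') ≤ R := hR ▸ le_csSup hKbdd hmem
    have hcg : c • g' = g := by
      rw [hg', smul_smul, mul_inv_cancel₀ (ne_of_gt hc0), one_smul]
    have : S f - S f₀ = S g := by rw [hg, map_sub]
    rw [this, ← hcg, map_smul, hGsmul, abs_of_pos hc0]
    calc c * nG (S g') ≤ c * R := mul_le_mul_of_nonneg_left hle (le_of_lt hc0)
    _ = 2 * CF * R := by rw [hc]
end
end

section
/- Let m ∈ ℕ, 0 < p, q ≤ ∞ and λ > (1/q − 1/p)₊ (with the convention a/∞ = 0), and set σ_j = j^{−λ} for 1 ≤ j ≤ m. Then there are constants c, C > 0 depending only on p, q and λ (independent of s and m) such that for all integers s with 1 ≤ s ≤ m/2: c·s^{−λ + 1/q − 1/p} ≤ sup_{x ∈ 𝓔_{p,σ}^m} σ_s(x)_q ≤ C·s^{−λ + 1/q − 1/p}. -/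
open Real
open scoped ENNReal NNReal

noncomputable section

/-- Membership in the `ℓ_p`-ellipsoid `𝓔_{p,σ}^m` with semiaxes `σ` (indexed 1-based),
for `p ∈ (0,∞]`. -/
def memEll (p : ℝ≥0∞) {m : ℕ} (σ : ℕ → ℝ) (x : Fin m → ℝ) : Prop :=
  if p = ⊤ then ∀ i : Fin m, |x i| ≤ σ ((i : ℕ) + 1)
  else ∑ i : Fin m, |x i| ^ p.toReal / σ ((i : ℕ) + 1) ^ p.toReal ≤ 1

/-- A vector of `ℝ^m` is `s`-sparse if at most `s` of its coordinates are non-zero. -/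
def IsSparse {m : ℕ} (s : ℕ) (z : Fin m → ℝ) : Prop :=
  ∃ T : Finset (Fin m), T.card ≤ s ∧ ∀ i ∉ T, z i = 0

/-- The `ℓ_q`-(quasi-)norm on `ℝ^m` for `q ∈ (0,∞]`. -/
def lqnorm (q : ℝ≥0∞) {m : ℕ} (x : Fin m → ℝ) : ℝ :=
  if q = ⊤ then ⨆ i, |x i| else (∑ i, |x i| ^ q.toReal) ^ (1 / q.toReal)

/-- The error of best `s`-term approximation of `x` in the `ℓ_q`-(quasi-)norm. -/
def bestApprox (q : ℝ≥0∞) {m : ℕ} (s : ℕ) (x : Fin m → ℝ) : ℝ :=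
  sInf {r : ℝ | ∃ z : Fin m → ℝ, IsSparse s z ∧ r = lqnorm q (x - z)}

namespace Stmt7Aux

lemma lqnorm_nonneg (q : ℝ≥0∞) {m : ℕ} (x : Fin m → ℝ) : 0 ≤ lqnorm q x := by
  rw [lqnorm]
  split
  · exact Real.iSup_nonneg fun i => abs_nonneg _
  · apply Real.rpow_nonneg
    apply Finset.sum_nonneg
    intro i _
    exact Real.rpow_nonneg (abs_nonneg _) _

lemma memEll_finite (p : ℝ≥0∞) (hptop : p ≠ ⊤) (lam : ℝ) {m : ℕ} (x : Fin m → ℝ) :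
    memEll p (fun j => (j : ℝ) ^ (-lam)) x ↔
      ∑ i : Fin m, |x i| ^ p.toReal * ((i : ℝ) + 1) ^ (lam * p.toReal) ≤ 1 := by
  rw [memEll, if_neg hptop]
  have hsum : ∀ i : Fin m,
      |x i| ^ p.toReal / ((((i : ℕ) + 1 : ℕ) : ℝ) ^ (-lam)) ^ p.toReal
        = |x i| ^ p.toReal * ((i : ℝ) + 1) ^ (lam * p.toReal) := by
    intro i
    have hc : (0 : ℝ) < ((i : ℕ) + 1 : ℕ) := by positivity
    rw [← Real.rpow_mul (by positivity), show -lam * p.toReal = -(lam * p.toReal) by ring,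
      Real.rpow_neg (by positivity)]
    rw [div_eq_mul_inv, inv_inv]
    push_cast
    ring
  rw [Finset.sum_congr rfl fun i _ => hsum i]

lemma sum_distinct_pow_ge (r : ℝ) (hr : 0 ≤ r) (T : Finset ℕ) (hT : ∀ t ∈ T, 1 ≤ t) :
    ∑ j ∈ Finset.range T.card, ((j : ℝ) + 1) ^ r ≤ ∑ t ∈ T, (t : ℝ) ^ r := by
  induction T using Finset.induction_on_max with
  | empty => simp
  | insert a s ha ih =>
    have hans : a ∉ s := fun h => lt_irrefl a (ha a h)
    rw [Finset.sum_insert hans, Finset.card_insert_of_notMem hans, Finset.sum_range_succ]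
    have hs1 : ∀ t ∈ s, 1 ≤ t := fun t ht => hT t (Finset.mem_insert_of_mem ht)
    have ha1 : 1 ≤ a := hT a (Finset.mem_insert_self a s)
    have hcard : s.card + 1 ≤ a := by
      have hsub : s ⊆ Finset.Icc 1 (a - 1) := by
        intro t ht
        simp only [Finset.mem_Icc]
        exact ⟨hs1 t ht, Nat.le_sub_one_of_lt (ha t ht)⟩
      have := Finset.card_le_card hsub
      rw [Nat.card_Icc] at this
      omega
    have h1 : ((s.card : ℝ) + 1) ^ r ≤ (a : ℝ) ^ r := by
      apply Real.rpow_le_rpow (by positivity) ?_ hr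
      exact_mod_cast hcard
    have h2 := ih hs1
    linarith
lemma sum_range_rpow_ge (r : ℝ) (hr : 0 ≤ r) (K : ℕ) (hK : 1 ≤ K) :
    ((K : ℝ) / 2) ^ (r + 1) ≤ ∑ j ∈ Finset.range K, ((j : ℝ) + 1) ^ r := by
  have h2 : (0 : ℝ) < (K : ℝ) / 2 := by positivity
  have hcount : ((K : ℝ) / 2) ≤ ((K - K / 2 : ℕ) : ℝ) := by
    have : K ≤ 2 * (K - K / 2) := by omega
    have := (Nat.cast_le (α := ℝ)).2 this
    push_cast at this ⊢
    linarith
  calc ((K : ℝ) / 2) ^ (r + 1) = ((K : ℝ) / 2) ^ r * ((K : ℝ) / 2) := by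
        rw [Real.rpow_add h2, Real.rpow_one]
    _ ≤ ((K : ℝ) / 2) ^ r * ((K - K / 2 : ℕ) : ℝ) := by
        have := Real.rpow_nonneg h2.le r
        nlinarith
    _ = ∑ _j ∈ Finset.Ico (K / 2) K, ((K : ℝ) / 2) ^ r := by
        rw [Finset.sum_const, Nat.card_Ico, nsmul_eq_mul]; ring
    _ ≤ ∑ j ∈ Finset.Ico (K / 2) K, ((j : ℝ) + 1) ^ r := by
        apply Finset.sum_le_sum
        intro j hj
        apply Real.rpow_le_rpow h2.le ?_ hr
        rw [Finset.mem_Ico] at hj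
        have : K < 2 * (j + 1) := by omega
        have := (Nat.cast_lt (α := ℝ)).2 this
        push_cast at this ⊢
        linarith
    _ ≤ ∑ j ∈ Finset.range K, ((j : ℝ) + 1) ^ r := by
        apply Finset.sum_le_sum_of_subset_of_nonneg
        · intro j hj
          rw [Finset.mem_Ico] at hj
          exact Finset.mem_range.2 hj.2
        · intro j _ _
          positivity
lemma exists_big (m : ℕ) (σ : Equiv.Perm (Fin m)) (k : Fin m) :
    ∃ j : Fin m, j ≤ k ∧ (k : ℕ) ≤ (σ j : ℕ) := by
  by_contra h
  push_neg at h
  have hsub : (Finset.Iic k).image σ ⊆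
      Finset.univ.filter (fun i : Fin m => (i : ℕ) < (k : ℕ)) := by
    intro i hi
    obtain ⟨j, hj, rfl⟩ := Finset.mem_image.mp hi
    exact Finset.mem_filter.2 ⟨Finset.mem_univ _, h j (Finset.mem_Iic.mp hj)⟩
  have h1 : ((Finset.Iic k).image σ).card = (k : ℕ) + 1 := by
    rw [Finset.card_image_of_injective _ σ.injective, Fin.card_Iic]
  have h2 : (Finset.univ.filter (fun i : Fin m => (i : ℕ) < (k : ℕ))).card ≤ (k : ℕ) := by
    have := Finset.card_le_card_of_injOn (s := Finset.univ.filter (fun i : Fin m => (i : ℕ) < (k : ℕ))) (t := Finset.range (k : ℕ)) (fun i : Fin m => (i : ℕ))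
      (fun i hi => Finset.mem_range.2 (Finset.mem_filter.mp hi).2)
      (fun i _ j _ hij => Fin.val_injective hij)
    simpa using this
  have := Finset.card_le_card hsub
  omega

lemma key_decay (p : ℝ≥0∞) (hp : 0 < p) (lam : ℝ) (hlam : 0 < lam) {m : ℕ}
    (x : Fin m → ℝ) (hx : memEll p (fun j => (j : ℝ) ^ (-lam)) x)
    (σ : Equiv.Perm (Fin m)) (hy : Antitone fun k => |x (σ k)|) (k : Fin m) :
    |x (σ k)| ≤ 2 ^ (lam + 1 / p.toReal) * ((k : ℝ) + 1) ^ (-(lam + 1 / p.toReal)) := by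
  obtain ⟨j, hjk, hjv⟩ := exists_big m σ k
  by_cases hptop : p = ⊤
  · subst hptop
    simp only [ENNReal.toReal_top, div_zero, one_div, inv_zero, add_zero]
    rw [memEll, if_pos rfl] at hx
    have h1 : |x (σ k)| ≤ |x (σ j)| := hy hjk
    have h2 : |x (σ j)| ≤ (((σ j : ℕ) + 1 : ℕ) : ℝ) ^ (-lam) := hx (σ j)
    have h3 : (((σ j : ℕ) + 1 : ℕ) : ℝ) ^ (-lam) ≤ ((k : ℝ) + 1) ^ (-lam) := by
      apply Real.rpow_le_rpow_of_nonpos (by positivity) ?_ (by linarith)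
      push_cast
      have : ((k : ℕ) : ℝ) ≤ ((σ j : ℕ) : ℝ) := by exact_mod_cast hjv
      linarith
    have h4 : (1 : ℝ) ≤ 2 ^ lam := by
      rw [show (1 : ℝ) = 2 ^ (0 : ℝ) by simp]
      exact Real.rpow_le_rpow_of_exponent_le one_le_two hlam.le
    have h5 : (0 : ℝ) ≤ ((k : ℝ) + 1) ^ (-lam) := Real.rpow_nonneg (by positivity) _
    calc |x (σ k)| ≤ ((k : ℝ) + 1) ^ (-lam) := h1.trans (h2.trans h3)
      _ ≤ 2 ^ lam * ((k : ℝ) + 1) ^ (-lam) := by nlinarith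
  · -- p finite
    set P := p.toReal with hPdef
    have hP : 0 < P := ENNReal.toReal_pos hp.ne' hptop
    rw [memEll_finite p hptop lam x] at hx
    -- reindex and take partial sum
    have hre : ∑ l : Fin m, |x (σ l)| ^ P * (((σ l : ℕ) : ℝ) + 1) ^ (lam * P)
        = ∑ i : Fin m, |x i| ^ P * (((i : ℕ) : ℝ) + 1) ^ (lam * P) :=
      Equiv.sum_comp σ (fun i : Fin m => |x i| ^ P * (((i : ℕ) : ℝ) + 1) ^ (lam * P))
    have hpart : ∑ l ∈ Finset.Iic k, |x (σ l)| ^ P * (((σ l : ℕ) : ℝ) + 1) ^ (lam * P) ≤ 1 := by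
      refine le_trans ?_ (hre.symm ▸ hx)
      apply Finset.sum_le_sum_of_subset_of_nonneg (Finset.subset_univ _)
      intro l _ _
      positivity
    have hterm : ∀ l ∈ Finset.Iic k,
        |x (σ k)| ^ P * (((σ l : ℕ) : ℝ) + 1) ^ (lam * P)
          ≤ |x (σ l)| ^ P * (((σ l : ℕ) : ℝ) + 1) ^ (lam * P) := by
      intro l hl
      have : |x (σ k)| ≤ |x (σ l)| := hy (Finset.mem_Iic.mp hl)
      have h0 : (0 : ℝ) ≤ (((σ l : ℕ) : ℝ) + 1) ^ (lam * P) := Real.rpow_nonneg (by positivity) _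
      exact mul_le_mul_of_nonneg_right (Real.rpow_le_rpow (abs_nonneg _) this hP.le) h0
    have hT : ∑ l ∈ Finset.Iic k, (((σ l : ℕ) : ℝ) + 1) ^ (lam * P)
        ≥ (((k : ℕ) + 1 : ℝ) / 2) ^ (lam * P + 1) := by
      set T : Finset ℕ := (Finset.Iic k).image (fun l => (σ l : ℕ) + 1) with hTdef
      have hinj : Function.Injective (fun l : Fin m => (σ l : ℕ) + 1) := by
        intro a b hab
        simp only [add_left_inj] at hab
        exact σ.injective (Fin.val_injective hab)
      have hcardT : T.card = (k : ℕ) + 1 := by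
        rw [hTdef, Finset.card_image_of_injective _ hinj, Fin.card_Iic]
      have hsumT : ∑ t ∈ T, (t : ℝ) ^ (lam * P) =
          ∑ l ∈ Finset.Iic k, ((((σ l : ℕ) + 1 : ℕ)) : ℝ) ^ (lam * P) :=
        Finset.sum_image (fun a _ b _ h => hinj h)
      have h1 := sum_distinct_pow_ge (lam * P) (by positivity) T (by
        intro t ht
        rw [hTdef] at ht
        obtain ⟨l, _, rfl⟩ := Finset.mem_image.mp ht
        omega)
      have h2 := sum_range_rpow_ge (lam * P) (by positivity) ((k : ℕ) + 1) (by omega)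
      rw [hcardT] at h1
      rw [hsumT] at h1
      have hcast : ∑ l ∈ Finset.Iic k, ((((σ l : ℕ) + 1 : ℕ)) : ℝ) ^ (lam * P)
          = ∑ l ∈ Finset.Iic k, (((σ l : ℕ) : ℝ) + 1) ^ (lam * P) := by
        apply Finset.sum_congr rfl
        intro l _
        push_cast
        ring_nf
      rw [hcast] at h1
      have : (((k : ℕ) + 1 : ℝ)) = ((((k : ℕ) + 1 : ℕ)) : ℝ) := by push_cast; ring
      rw [this]
      exact le_trans h2 h1
    -- combine
    set a := |x (σ k)| with hadef
    set b := (((k : ℕ) + 1 : ℝ)) / 2 with hbdef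
    have hb : (0 : ℝ) < b := by rw [hbdef]; positivity
    have hcomb : a ^ P * b ^ (lam * P + 1) ≤ 1 := by
      calc a ^ P * b ^ (lam * P + 1)
          ≤ a ^ P * ∑ l ∈ Finset.Iic k, (((σ l : ℕ) : ℝ) + 1) ^ (lam * P) := by
            apply mul_le_mul_of_nonneg_left hT (Real.rpow_nonneg (abs_nonneg _) _)
        _ = ∑ l ∈ Finset.Iic k, a ^ P * (((σ l : ℕ) : ℝ) + 1) ^ (lam * P) := by
            rw [Finset.mul_sum]
        _ ≤ ∑ l ∈ Finset.Iic k, |x (σ l)| ^ P * (((σ l : ℕ) : ℝ) + 1) ^ (lam * P) :=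
            Finset.sum_le_sum hterm
        _ ≤ 1 := hpart
    have hBpos : (0 : ℝ) < b ^ (lam * P + 1) := Real.rpow_pos_of_pos hb _
    have haP : a ^ P ≤ (b ^ (lam * P + 1))⁻¹ := by
      rw [← one_div]
      rw [le_div_iff₀ hBpos]
      exact hcomb
    have haP' : a ^ P ≤ b ^ (-(lam * P + 1)) := by
      rwa [Real.rpow_neg hb.le]
    have hstep : a ≤ (b ^ (-(lam * P + 1))) ^ P⁻¹ := by
      have h1 : a = (a ^ P) ^ P⁻¹ := (Real.rpow_rpow_inv (abs_nonneg _) hP.ne').symm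
      rw [h1]
      exact Real.rpow_le_rpow (Real.rpow_nonneg (abs_nonneg _) _) haP' (by positivity)
    have hexp : (b ^ (-(lam * P + 1))) ^ P⁻¹ = b ^ (-(lam + 1 / P)) := by
      rw [← Real.rpow_mul hb.le]
      congr 1
      field_simp
    have hbval : b ^ (-(lam + 1 / P)) = 2 ^ (lam + 1 / P) * (((k : ℕ) : ℝ) + 1) ^ (-(lam + 1 / P)) := by
      rw [hbdef, Real.div_rpow (by positivity) (by norm_num),
        Real.rpow_neg (by norm_num : (0:ℝ) ≤ 2) (lam + 1 / P), div_eq_mul_inv, inv_inv, mul_comm]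
    calc a ≤ (b ^ (-(lam * P + 1))) ^ P⁻¹ := hstep
      _ = 2 ^ (lam + 1 / P) * (((k : ℕ) : ℝ) + 1) ^ (-(lam + 1 / P)) := by rw [hexp, hbval]

lemma tail_sum_le (r : ℝ) (hr : 1 < r) (s m : ℕ) (hs : 1 ≤ s) (hsm : s ≤ m) :
    ∑ i ∈ Finset.Ico s m, ((i : ℝ) + 1) ^ (-r) ≤ (s : ℝ) ^ (1 - r) / (r - 1) := by
  have hs0 : (0 : ℝ) < (s : ℝ) := by exact_mod_cast hs
  have hanti : AntitoneOn (fun x : ℝ => x ^ (-r)) (Set.Icc (s : ℝ) (m : ℝ)) := by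
    intro a ha b hb hab
    exact Real.rpow_le_rpow_of_nonpos (lt_of_lt_of_le hs0 ha.1) hab (by linarith)
  have h1 := AntitoneOn.sum_le_integral_Ico (by exact_mod_cast hsm) hanti
  rw [integral_rpow (Or.inr ⟨by intro h; apply hr.ne'; linarith [neg_eq_iff_eq_neg.mp h], by
      rw [Set.uIcc_of_le (by exact_mod_cast hsm)]
      intro h0
      exact absurd (Set.mem_Icc.mp h0).1 (by linarith)⟩)] at h1
  have heq : ∑ i ∈ Finset.Ico s m, ((i : ℝ) + 1) ^ (-r)
      = ∑ i ∈ Finset.Ico s m, (fun x : ℝ => x ^ (-r)) ((i + 1 : ℕ) : ℝ) := by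
    apply Finset.sum_congr rfl
    intro i _
    push_cast
    rfl
  rw [heq]
  refine h1.trans ?_
  have hm0 : (0 : ℝ) ≤ (m : ℝ) ^ (-r + 1) := Real.rpow_nonneg (by positivity) _
  have hr1 : (0 : ℝ) < r - 1 := by linarith
  have : ((m : ℝ) ^ (-r + 1) - (s : ℝ) ^ (-r + 1)) / (-r + 1)
      = ((s : ℝ) ^ (-r + 1) - (m : ℝ) ^ (-r + 1)) / (r - 1) := by
    rw [div_eq_div_iff (by linarith) (by linarith)]; ring
  rw [this, show (-r + 1) = 1 - r by ring]
  gcongr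
  linarith [Real.rpow_nonneg (show (0:ℝ) ≤ (m:ℝ) by positivity) (1 - r)]
lemma sparse_z {m : ℕ} (s : ℕ) (x : Fin m → ℝ) (σ : Equiv.Perm (Fin m)) :
    IsSparse s (fun i => if ((σ.symm i : Fin m) : ℕ) < s then x i else 0) := by
  refine ⟨Finset.univ.filter (fun i : Fin m => ((σ.symm i : Fin m) : ℕ) < s), ?_, ?_⟩
  · have := Finset.card_le_card_of_injOn
      (s := Finset.univ.filter (fun i : Fin m => ((σ.symm i : Fin m) : ℕ) < s))
      (t := Finset.range s) (fun i : Fin m => ((σ.symm i : Fin m) : ℕ))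
      (fun i hi => Finset.mem_range.2 (Finset.mem_filter.mp hi).2)
      (fun i _ j _ hij => σ.symm.injective (Fin.val_injective hij))
    simpa using this
  · intro i hi
    rw [Finset.mem_filter] at hi
    push_neg at hi
    simp only []
    rw [if_neg (not_lt.mpr (hi (Finset.mem_univ i)))]

lemma bestApprox_le_of_sparse (q : ℝ≥0∞) {m : ℕ} (s : ℕ) (x z : Fin m → ℝ)
    (hz : IsSparse s z) : bestApprox q s x ≤ lqnorm q (x - z) := by
  apply csInf_le
  · exact ⟨0, fun r hr => by obtain ⟨z', _, rfl⟩ := hr; exact lqnorm_nonneg q _⟩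
  · exact ⟨z, hz, rfl⟩

lemma exists_sorted {m : ℕ} (x : Fin m → ℝ) :
    ∃ σ : Equiv.Perm (Fin m), Antitone fun k => |x (σ k)| := by
  refine ⟨Tuple.sort (fun i => -|x i|), ?_⟩
  intro a b hab
  have := Tuple.monotone_sort (fun i => -|x i|) hab
  simpa using this

lemma sub_sparse_apply {m : ℕ} (s : ℕ) (x : Fin m → ℝ) (σ : Equiv.Perm (Fin m)) (k : Fin m) :
    (x - fun i => if ((σ.symm i : Fin m) : ℕ) < s then x i else 0) (σ k)
      = if (k : ℕ) < s then 0 else x (σ k) := by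
  simp only [Pi.sub_apply, Equiv.symm_apply_apply]
  split <;> ring

lemma upper_bound (p q : ℝ≥0∞) (hp : 0 < p) (hq : 0 < q) (lam : ℝ)
    (hlam : max (1 / q.toReal - 1 / p.toReal) 0 < lam) :
    ∃ C : ℝ, 0 < C ∧ ∀ m s : ℕ, 1 ≤ s → 2 * s ≤ m →
      ∀ x : Fin m → ℝ, memEll p (fun j => (j : ℝ) ^ (-lam)) x →
        bestApprox q s x ≤ C * (s : ℝ) ^ (-lam + 1 / q.toReal - 1 / p.toReal) := by
  have hlam0 : 0 < lam := lt_of_le_of_lt (le_max_right _ 0) hlam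
  set d : ℝ := lam + 1 / p.toReal with hddef
  have hPinv : 0 ≤ 1 / p.toReal := by positivity
  have hd0 : 0 < d := by rw [hddef]; linarith
  have hdq : 1 / q.toReal < d := by
    have := lt_of_le_of_lt (le_max_left _ 0) hlam
    rw [hddef]; linarith
  have he : -lam + 1 / q.toReal - 1 / p.toReal = 1 / q.toReal - d := by rw [hddef]; ring
  -- choose C
  by_cases hqtop : q = ⊤
  case pos =>
    refine ⟨2 ^ d, Real.rpow_pos_of_pos two_pos d, ?_⟩
    intro m s hs hsm x hx
    obtain ⟨σ, hy⟩ := exists_sorted x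
    have hdecay := fun k => key_decay p hp lam hlam0 x hx σ hy k
    set z : Fin m → ℝ := fun i => if ((σ.symm i : Fin m) : ℕ) < s then x i else 0 with hzdef
    have hsm' : s < m := by omega
    have hs0 : (0 : ℝ) < (s : ℝ) := by exact_mod_cast hs
    set k0 : Fin m := ⟨s, hsm'⟩ with hk0
    haveI : Nonempty (Fin m) := ⟨k0⟩
    have hbound : lqnorm q (x - z) ≤ 2 ^ d * (s : ℝ) ^ (-d) := by
      rw [lqnorm, if_pos hqtop]
      apply ciSup_le
      intro i
      have hi0 : i = σ (σ.symm i) := (Equiv.apply_symm_apply σ i).symm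
      have hi : (x - z) i = if ((σ.symm i : Fin m) : ℕ) < s then 0 else x (σ (σ.symm i)) := by
        conv_lhs => rw [hi0]
        rw [hzdef, sub_sparse_apply s x σ (σ.symm i)]
      rw [hi]
      by_cases hc : ((σ.symm i : Fin m) : ℕ) < s
      · rw [if_pos hc, abs_zero]
        positivity
      · rw [if_neg hc]
        push_neg at hc
        have h2 : |x (σ (σ.symm i))| ≤ |x (σ k0)| := hy (by rw [Fin.le_def]; exact hc)
        have h3 := hdecay k0
        have h4 : (((k0 : ℕ) : ℝ) + 1) ^ (-d) ≤ (s : ℝ) ^ (-d) := by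
          apply Real.rpow_le_rpow_of_nonpos hs0 ?_ (by linarith)
          rw [hk0]
          simp only [Fin.val_mk]
          linarith
        have h5 : (0 : ℝ) < (2:ℝ) ^ d := Real.rpow_pos_of_pos two_pos d
        calc |x (σ (σ.symm i))| ≤ |x (σ k0)| := h2
          _ ≤ 2 ^ d * (((k0 : ℕ) : ℝ) + 1) ^ (-d) := h3
          _ ≤ 2 ^ d * (s : ℝ) ^ (-d) := by nlinarith
    have hfinal : (2:ℝ) ^ d * (s : ℝ) ^ (-d)
        = 2 ^ d * (s : ℝ) ^ (-lam + 1 / q.toReal - 1 / p.toReal) := by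
      congr 1
      congr 1
      rw [hqtop]
      simp [hddef]
      ring
    exact le_trans (bestApprox_le_of_sparse q s x z (sparse_z s x σ)) (hbound.trans_eq hfinal)
  case neg =>
    set Q : ℝ := q.toReal with hQdef
    have hQ : 0 < Q := ENNReal.toReal_pos hq.ne' hqtop
    set r : ℝ := d * Q with hrdef
    have hr : 1 < r := by
      rw [hrdef]
      rw [div_lt_iff₀ hQ] at hdq
      linarith [hdq]
    have hC2 : (0:ℝ) < 2 ^ d * ((r - 1)⁻¹) ^ (1 / Q) :=
      mul_pos (Real.rpow_pos_of_pos two_pos d)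
        (Real.rpow_pos_of_pos (inv_pos.mpr (by linarith)) _)
    refine ⟨2 ^ d * ((r - 1)⁻¹) ^ (1 / Q), hC2, ?_⟩
    intro m s hs hsm x hx
    obtain ⟨σ, hy⟩ := exists_sorted x
    have hdecay := fun k => key_decay p hp lam hlam0 x hx σ hy k
    set z : Fin m → ℝ := fun i => if ((σ.symm i : Fin m) : ℕ) < s then x i else 0 with hzdef
    have hs0 : (0 : ℝ) < (s : ℝ) := by exact_mod_cast hs
    have h2d : (0 : ℝ) < (2:ℝ) ^ d := Real.rpow_pos_of_pos two_pos d
    set F : Finset (Fin m) := Finset.univ.filter (fun k : Fin m => ¬((k : ℕ) < s)) with hFdef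
    have hsum1 : ∑ i, |(x - z) i| ^ Q = ∑ k ∈ F, |x (σ k)| ^ Q := by
      have hterm : ∀ k : Fin m, |(x - z) (σ k)| ^ Q
          = if ¬((k : ℕ) < s) then |x (σ k)| ^ Q else 0 := fun k => by
        rw [hzdef, sub_sparse_apply s x σ k]
        by_cases hc : (k : ℕ) < s
        · rw [if_pos hc, if_neg (not_not_intro hc), abs_zero, Real.zero_rpow hQ.ne']
        · rw [if_neg hc, if_pos hc]
      rw [← Equiv.sum_comp σ (fun i => |(x - z) i| ^ Q)]
      simp only [hterm]
      rw [hFdef, Finset.sum_filter]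
    have hsum2 : ∑ k ∈ F, |x (σ k)| ^ Q
        ≤ ((2:ℝ) ^ d) ^ Q * ∑ k ∈ F, (((k : ℕ) : ℝ) + 1) ^ (-r) := by
      rw [Finset.mul_sum]
      apply Finset.sum_le_sum
      intro k _
      have h1 : |x (σ k)| ^ Q ≤ (2 ^ d * (((k : ℕ) : ℝ) + 1) ^ (-d)) ^ Q :=
        Real.rpow_le_rpow (abs_nonneg _) (hdecay k) hQ.le
      refine h1.trans_eq ?_
      rw [Real.mul_rpow h2d.le (Real.rpow_nonneg (by positivity) _),
        ← Real.rpow_mul (by positivity : (0:ℝ) ≤ ((k : ℕ) : ℝ) + 1)]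
      rw [hrdef]
      ring_nf
    have himg : F.image (fun k : Fin m => (k : ℕ)) = Finset.Ico s m := by
      ext t
      simp only [hFdef, Finset.mem_image, Finset.mem_filter, Finset.mem_univ, true_and,
        Finset.mem_Ico, not_lt]
      constructor
      · rintro ⟨k, hk, rfl⟩; exact ⟨hk, k.isLt⟩
      · rintro ⟨hts, htm⟩; exact ⟨⟨t, htm⟩, hts, rfl⟩
    have hsum3 : ∑ k ∈ F, (((k : ℕ) : ℝ) + 1) ^ (-r) = ∑ i ∈ Finset.Ico s m, ((i : ℝ) + 1) ^ (-r) := by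
      rw [← himg, Finset.sum_image (fun a _ b _ h => Fin.val_injective h)]
    have hsum4 := tail_sum_le r hr s m hs (by omega)
    have htot : ∑ i, |(x - z) i| ^ Q ≤ ((2:ℝ) ^ d) ^ Q * ((s : ℝ) ^ (1 - r) * (r - 1)⁻¹) := by
      rw [hsum1]
      refine hsum2.trans ?_
      rw [hsum3]
      have h0 : (0:ℝ) ≤ ((2:ℝ) ^ d) ^ Q := by positivity
      have := mul_le_mul_of_nonneg_left hsum4 h0
      rw [div_eq_mul_inv] at this
      exact this
    have hbound : lqnorm q (x - z)
        ≤ 2 ^ d * ((r - 1)⁻¹) ^ (1 / Q) * (s : ℝ) ^ (-lam + 1 / q.toReal - 1 / p.toReal) := by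
      rw [lqnorm, if_neg hqtop, ← hQdef]
      have hsumnn : (0:ℝ) ≤ ∑ i, |(x - z) i| ^ Q :=
        Finset.sum_nonneg fun i _ => Real.rpow_nonneg (abs_nonneg _) _
      have h1 : (∑ i, |(x - z) i| ^ Q) ^ (1 / Q)
          ≤ (((2:ℝ) ^ d) ^ Q * ((s : ℝ) ^ (1 - r) * (r - 1)⁻¹)) ^ (1 / Q) :=
        Real.rpow_le_rpow hsumnn htot (by positivity)
      refine h1.trans_eq ?_
      have hrinv : (0:ℝ) ≤ (r - 1)⁻¹ := inv_nonneg.mpr (by linarith)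
      rw [Real.mul_rpow (by positivity) (mul_nonneg (Real.rpow_nonneg hs0.le _) hrinv),
        Real.mul_rpow (Real.rpow_nonneg hs0.le _) hrinv,
        one_div, Real.rpow_rpow_inv (by positivity) hQ.ne',
        ← Real.rpow_mul hs0.le]
      rw [show (1 - r) * Q⁻¹ = -lam + Q⁻¹ - 1 / p.toReal by
        rw [hrdef, hddef]; field_simp; ring]
      ring
    exact le_trans (bestApprox_le_of_sparse q s x z (sparse_z s x σ)) hbound

lemma lower_bound (p q : ℝ≥0∞) (hp : 0 < p) (hq : 0 < q) (lam : ℝ) (hlam0 : 0 < lam)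
    (m s : ℕ) (hs : 1 ≤ s) (hsm : 2 * s ≤ m) :
    ∃ x : Fin m → ℝ, memEll p (fun j => (j : ℝ) ^ (-lam)) x ∧
      (2 : ℝ) ^ (-(lam + 1 / p.toReal)) * (s : ℝ) ^ (-lam + 1 / q.toReal - 1 / p.toReal)
        ≤ bestApprox q s x := by
  set d : ℝ := lam + 1 / p.toReal with hddef
  have hPinv : 0 ≤ 1 / p.toReal := by positivity
  have hd0 : 0 < d := by rw [hddef]; linarith
  have hs0 : (0 : ℝ) < (s : ℝ) := by exact_mod_cast hs
  have h2s0 : (0 : ℝ) < ((2 * s : ℕ) : ℝ) := by positivity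
  set a : ℝ := ((2 * s : ℕ) : ℝ) ^ (-d) with hadef
  have ha0 : 0 < a := Real.rpow_pos_of_pos h2s0 _
  set x : Fin m → ℝ := fun i => if (i : ℕ) < 2 * s then a else 0 with hxdef
  have hasplit : a = 2 ^ (-d) * (s : ℝ) ^ (-d) := by
    rw [hadef]
    push_cast
    rw [Real.mul_rpow (by norm_num) hs0.le]
  -- membership
  have hmem : memEll p (fun j => (j : ℝ) ^ (-lam)) x := by
    by_cases hptop : p = ⊤
    · rw [memEll, if_pos hptop]
      intro i
      simp only [hxdef]
      by_cases hc : (i : ℕ) < 2 * s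
      · rw [if_pos hc, abs_of_pos ha0, hadef]
        have hdlam : d = lam := by
          rw [hddef, hptop]
          simp
        rw [hdlam]
        apply Real.rpow_le_rpow_of_nonpos (by positivity) ?_ (by linarith)
        have : (i : ℕ) + 1 ≤ 2 * s := hc
        exact_mod_cast this
      · rw [if_neg hc, abs_zero]
        positivity
    · set P : ℝ := p.toReal with hPdef
      have hP : 0 < P := ENNReal.toReal_pos hp.ne' hptop
      rw [memEll_finite p hptop lam x]
      have hterm : ∀ i : Fin m, |x i| ^ P * (((i : ℕ) : ℝ) + 1) ^ (lam * P)
          ≤ if (i : ℕ) < 2 * s then ((2 * s : ℕ) : ℝ)⁻¹ else 0 := by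
        intro i
        simp only [hxdef]
        by_cases hc : (i : ℕ) < 2 * s
        · rw [if_pos hc, if_pos hc, abs_of_pos ha0, hadef, ← Real.rpow_mul h2s0.le]
          have hdP : -d * P = -(lam * P) - 1 := by rw [hddef]; field_simp; ring
          rw [hdP]
          have hle : (((i : ℕ) : ℝ) + 1) ^ (lam * P) ≤ ((2 * s : ℕ) : ℝ) ^ (lam * P) := by
            apply Real.rpow_le_rpow (by positivity) ?_ (by positivity)
            have h2 : (i : ℕ) + 1 ≤ 2 * s := hc
            exact_mod_cast h2
          calc ((2 * s : ℕ) : ℝ) ^ (-(lam * P) - 1) * (((i : ℕ) : ℝ) + 1) ^ (lam * P)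
              ≤ ((2 * s : ℕ) : ℝ) ^ (-(lam * P) - 1) * ((2 * s : ℕ) : ℝ) ^ (lam * P) :=
                mul_le_mul_of_nonneg_left hle (Real.rpow_nonneg h2s0.le _)
            _ = ((2 * s : ℕ) : ℝ)⁻¹ := by
                rw [← Real.rpow_add h2s0, show -(lam * P) - 1 + lam * P = -1 by ring,
                  Real.rpow_neg_one]
        · rw [if_neg hc, if_neg hc, abs_zero, Real.zero_rpow hP.ne', zero_mul]
      calc ∑ i : Fin m, |x i| ^ P * (((i : ℕ) : ℝ) + 1) ^ (lam * P)
          ≤ ∑ i : Fin m, if (i : ℕ) < 2 * s then ((2 * s : ℕ) : ℝ)⁻¹ else 0 :=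
            Finset.sum_le_sum fun i _ => hterm i
        _ = (Finset.univ.filter (fun i : Fin m => (i : ℕ) < 2 * s)).card
              * ((2 * s : ℕ) : ℝ)⁻¹ := by
            rw [← Finset.sum_filter, Finset.sum_const, nsmul_eq_mul]
        _ ≤ (2 * s : ℕ) * ((2 * s : ℕ) : ℝ)⁻¹ := by
            apply mul_le_mul_of_nonneg_right ?_ (by positivity)
            have := Finset.card_le_card_of_injOn
              (s := Finset.univ.filter (fun i : Fin m => (i : ℕ) < 2 * s))
              (t := Finset.range (2 * s)) (fun i : Fin m => (i : ℕ))
              (fun i hi => Finset.mem_range.2 (Finset.mem_filter.mp hi).2)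
              (fun i _ j _ hij => Fin.val_injective hij)
            rw [Finset.card_range] at this
            exact_mod_cast this
        _ = 1 := mul_inv_cancel₀ (by positivity)
  refine ⟨x, hmem, ?_⟩
  -- lower bound on the best approximation
  apply le_csInf
  · exact ⟨lqnorm q (x - 0), 0, ⟨∅, by simp, fun i _ => rfl⟩, rfl⟩
  rintro b ⟨z, ⟨T, hTcard, hTz⟩, rfl⟩
  -- the untouched set U
  set A : Finset (Fin m) := Finset.univ.filter (fun i : Fin m => (i : ℕ) < 2 * s) with hAdef
  have hm0 : 0 < m := by omega
  have hAcard : 2 * s ≤ A.card := by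
    have hcard := Finset.card_le_card_of_injOn
      (s := Finset.range (2 * s)) (t := A)
      (fun j => (⟨j % m, Nat.mod_lt j hm0⟩ : Fin m))
      (fun j hj => by
        rw [Finset.mem_coe, Finset.mem_range] at hj
        refine Finset.mem_filter.2 ⟨Finset.mem_univ _, ?_⟩
        simp only [Fin.val_mk]
        rw [Nat.mod_eq_of_lt (by omega)]
        exact hj)
      (fun j hj j' hj' hne => by
        rw [Finset.mem_coe, Finset.mem_range] at hj hj'
        have hv := congrArg Fin.val hne
        simp only [Fin.val_mk] at hv
        rwa [Nat.mod_eq_of_lt (by omega), Nat.mod_eq_of_lt (by omega)] at hv)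
    simpa using hcard
  set U : Finset (Fin m) := A \ T with hUdef
  have hUcard : s ≤ U.card := by
    rw [hUdef]
    have := Finset.le_card_sdiff T A
    omega
  have hUval : ∀ i ∈ U, (x - z) i = a := by
    intro i hi
    rw [hUdef, Finset.mem_sdiff] at hi
    have h1 : x i = a := by
      simp only [hxdef]
      rw [if_pos (Finset.mem_filter.mp hi.1).2]
    have h2 : z i = 0 := hTz i hi.2
    simp [Pi.sub_apply, h1, h2]
  by_cases hqtop : q = ⊤
  · -- q = ∞
    obtain ⟨i0, hi0⟩ := Finset.card_pos.mp (lt_of_lt_of_le hs hUcard)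
    rw [lqnorm, if_pos hqtop]
    have h1 : a ≤ ⨆ i, |(x - z) i| := by
      have := le_ciSup (Set.Finite.bddAbove (Set.finite_range fun i => |(x - z) i|)) i0
      rw [hUval i0 hi0, abs_of_pos ha0] at this
      exact this
    refine le_trans ?_ h1
    rw [hasplit, hqtop]
    simp only [ENNReal.toReal_top]
    rw [show -lam + 1 / (0:ℝ) - 1 / p.toReal = -d by rw [hddef]; simp; ring]
  · -- q finite
    set Q : ℝ := q.toReal with hQdef
    have hQ : 0 < Q := ENNReal.toReal_pos hq.ne' hqtop
    rw [lqnorm, if_neg hqtop, ← hQdef]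
    have h1 : (s : ℝ) * a ^ Q ≤ ∑ i, |(x - z) i| ^ Q := by
      calc (s : ℝ) * a ^ Q ≤ (U.card : ℝ) * a ^ Q := by
            apply mul_le_mul_of_nonneg_right ?_ (Real.rpow_nonneg ha0.le _)
            exact_mod_cast hUcard
        _ = ∑ i ∈ U, |(x - z) i| ^ Q := by
            rw [Finset.sum_congr rfl (fun i hi => by rw [hUval i hi, abs_of_pos ha0]),
              Finset.sum_const, nsmul_eq_mul]
        _ ≤ ∑ i, |(x - z) i| ^ Q := by
            apply Finset.sum_le_sum_of_subset_of_nonneg (Finset.subset_univ _)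
            intro i _ _
            positivity
    have h2 : ((s : ℝ) * a ^ Q) ^ (1 / Q) ≤ (∑ i, |(x - z) i| ^ Q) ^ (1 / Q) :=
      Real.rpow_le_rpow (by positivity) h1 (by positivity)
    refine le_trans ?_ h2
    rw [Real.mul_rpow hs0.le (Real.rpow_nonneg ha0.le _), one_div,
      Real.rpow_rpow_inv ha0.le hQ.ne', hasplit, ← mul_assoc, mul_comm ((s:ℝ) ^ Q⁻¹) _,
      mul_assoc, ← Real.rpow_add hs0]
    rw [show -lam + Q⁻¹ - 1 / p.toReal = Q⁻¹ + -d by rw [hddef]; rw [one_div]; ring]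

end Stmt7Aux

theorem stmt7 :
    ∀ p q : ℝ≥0∞, 0 < p → 0 < q →
    ∀ lam : ℝ, max (1 / q.toReal - 1 / p.toReal) 0 < lam →
      ∃ c C : ℝ, 0 < c ∧ 0 < C ∧
        ∀ m s : ℕ, 1 ≤ s → 2 * s ≤ m →
          c * (s : ℝ) ^ (-lam + 1 / q.toReal - 1 / p.toReal) ≤
            sSup (bestApprox q s ''
              {x : Fin m → ℝ | memEll p (fun j => (j : ℝ) ^ (-lam)) x}) ∧
          sSup (bestApprox q s ''
              {x : Fin m → ℝ | memEll p (fun j => (j : ℝ) ^ (-lam)) x}) ≤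
            C * (s : ℝ) ^ (-lam + 1 / q.toReal - 1 / p.toReal) := by
  intro p q hp hq lam hlam
  obtain ⟨C, hC, hCb⟩ := Stmt7Aux.upper_bound p q hp hq lam hlam
  have hlam0 : 0 < lam := lt_of_le_of_lt (le_max_right _ 0) hlam
  have hc0 : (0 : ℝ) < 2 ^ (-(lam + 1 / p.toReal)) := Real.rpow_pos_of_pos two_pos _
  refine ⟨_, C, hc0, hC, ?_⟩
  intro m s hs hsm
  set e : ℝ := -lam + 1 / q.toReal - 1 / p.toReal with hedef
  have hub : ∀ r ∈ bestApprox q s ''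
      {x : Fin m → ℝ | memEll p (fun j => (j : ℝ) ^ (-lam)) x}, r ≤ C * (s : ℝ) ^ e := by
    rintro r ⟨x, hx, rfl⟩
    exact hCb m s hs hsm x hx
  have hbdd : BddAbove (bestApprox q s ''
      {x : Fin m → ℝ | memEll p (fun j => (j : ℝ) ^ (-lam)) x}) :=
    ⟨C * (s : ℝ) ^ e, fun r hr => hub r hr⟩
  have hmem0 : (0 : Fin m → ℝ) ∈
      {x : Fin m → ℝ | memEll p (fun j => (j : ℝ) ^ (-lam)) x} := by
    rw [Set.mem_setOf_eq, memEll]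
    split
    · intro i
      simp only [Pi.zero_apply, abs_zero]
      positivity
    · rename_i hptop
      have hP : 0 < p.toReal := ENNReal.toReal_pos hp.ne' hptop
      simp only [Pi.zero_apply, abs_zero, Real.zero_rpow hP.ne', zero_div]
      simp
  constructor
  · obtain ⟨x, hx, hlow⟩ := Stmt7Aux.lower_bound p q hp hq lam hlam0 m s hs hsm
    exact le_trans hlow (le_csSup hbdd (Set.mem_image_of_mem _ hx))
  · exact csSup_le ⟨_, Set.mem_image_of_mem _ hmem0⟩ hub
end
end

section
/- Let Ω ⊂ ℝ^d be a bounded convex domain (a bounded, open, convex, non-empty set) and let 0 < γ ≤ ∞. Then there exist constants c, C > 0 (depending on Ω, γ and d) such that for all n ∈ ℕ: c·n^{−1/d} ≤ inf{ ‖dist(·, P)‖_{L_γ(Ω)} : P ⊂ Ω finite with #P ≤ n } ≤ C·n^{−1/d}. -/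
open MeasureTheory Real
open scoped ENNReal NNReal

open Metric

set_option maxHeartbeats 1000000

noncomputable section

/-- The `L_γ(Ω)`-norm (for `0 < γ ≤ ∞`) of the distance function `x ↦ dist(x, S)` to a
set `S`, with respect to Lebesgue measure on `Ω`. -/
def distLp {d : ℕ} (γ : ℝ≥0∞) (Ω S : Set (EuclideanSpace ℝ (Fin d))) : ℝ :=
  if γ = ⊤ then ⨆ x ∈ Ω, Metric.infDist x S
  else (∫ x in Ω, Metric.infDist x S ^ γ.toReal) ^ (1 / γ.toReal)

-- maximal separated set
lemma exists_net {α : Type*} [MetricSpace α] (Ω : Set α) (hne : Ω.Nonempty) {r : ℝ} (hr : 0 < r) :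
    ∃ T : Set α, T ⊆ Ω ∧ T.Nonempty ∧ (T.Pairwise fun x y => r ≤ dist x y) ∧
      ∀ x ∈ Ω, ∃ t ∈ T, dist x t < r := by
  have hz : ∀ c ⊆ {T : Set α | T ⊆ Ω ∧ T.Pairwise fun x y => r ≤ dist x y},
      IsChain (· ⊆ ·) c → ∃ ub ∈ {T : Set α | T ⊆ Ω ∧ T.Pairwise fun x y => r ≤ dist x y},
        ∀ s ∈ c, s ⊆ ub := by
    intro c hc hchain
    refine ⟨⋃₀ c, ⟨?_, ?_⟩, fun s hs => Set.subset_sUnion_of_mem hs⟩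
    · exact Set.sUnion_subset fun s hs => (hc hs).1
    · intro a ha b hb hab
      obtain ⟨s, hs, has⟩ := ha
      obtain ⟨t, ht, hbt⟩ := hb
      rcases hchain.total hs ht with h | h
      · exact (hc ht).2 (h has) hbt hab
      · exact (hc hs).2 has (h hbt) hab
  obtain ⟨T, hmax⟩ := zorn_subset _ hz
  · obtain ⟨hTΩ, hsep⟩ := hmax.prop
    have hcov : ∀ x ∈ Ω, ∃ t ∈ T, dist x t < r := by
      intro x hx
      by_contra hcon
      push_neg at hcon
      have hxT : x ∉ T := by
        intro hxT
        have h0 := hcon x hxT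
        rw [dist_self] at h0
        exact absurd h0 (not_le.mpr hr)
      have : insert x T ∈ {T : Set α | T ⊆ Ω ∧ T.Pairwise fun x y => r ≤ dist x y} := by
        constructor
        · exact Set.insert_subset hx hTΩ
        · intro a ha b hb hab
          rcases ha with rfl | ha <;> rcases hb with rfl | hb
          · exact absurd rfl hab
          · exact hcon b hb
          · rw [dist_comm]; exact hcon a ha
          · exact hsep ha hb hab
      have := hmax.eq_of_subset this (Set.subset_insert x T)
      exact hxT (this ▸ Set.mem_insert x T)
    have hTne : T.Nonempty := by
      obtain ⟨x₀, hx₀⟩ := hne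
      obtain ⟨t, ht, -⟩ := hcov x₀ hx₀
      exact ⟨t, ht⟩
    exact ⟨T, hTΩ, hTne, hsep, hcov⟩

lemma exists_covering (d : ℕ) (Ω : Set (EuclideanSpace ℝ (Fin d)))
    (hne : Ω.Nonempty) (hbd : Bornology.IsBounded Ω) :
    ∃ K : ℝ, 0 < K ∧ ∀ r : ℝ, 0 < r → r ≤ Metric.diam Ω + 1 →
      ∃ P : Finset (EuclideanSpace ℝ (Fin d)), ↑P ⊆ Ω ∧ P.Nonempty ∧
        ((P.card : ℝ) * r ^ d ≤ K) ∧ ∀ x ∈ Ω, Metric.infDist x ↑P ≤ r := by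
  classical
  set ω : ℝ≥0∞ := volume (ball (0 : EuclideanSpace ℝ (Fin d)) 1) with hω
  have hω0 : 0 < ω := measure_ball_pos _ _ one_pos
  have hωtop : ω ≠ ∞ := measure_ball_lt_top.ne
  have hw0 : 0 < ω.toReal := ENNReal.toReal_pos hω0.ne' hωtop
  set D : ℝ := Metric.diam Ω + 1 with hDdef
  have hD0 : 0 < D := by positivity
  set W : Set (EuclideanSpace ℝ (Fin d)) := Metric.thickening D Ω with hWdef
  have hWbd : Bornology.IsBounded W := hbd.thickening
  have hWtop : volume W ≠ ∞ := hWbd.measure_lt_top.ne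
  have hW0 : 0 < volume W := by
    refine (Metric.isOpen_thickening).measure_pos volume ?_
    obtain ⟨x₀, hx₀⟩ := hne
    exact ⟨x₀, Metric.self_subset_thickening hD0 Ω hx₀⟩
  have hV0 : 0 < (volume W).toReal := ENNReal.toReal_pos hW0.ne' hWtop
  refine ⟨(volume W).toReal * 2 ^ d / ω.toReal, by positivity, ?_⟩
  intro r hr hrD
  -- packing bound for any separated finset inside Ω
  have pack : ∀ F : Finset (EuclideanSpace ℝ (Fin d)), ↑F ⊆ Ω → ((F : Set (EuclideanSpace ℝ (Fin d))).Pairwise fun x y => r ≤ dist x y) →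
      (F.card : ℝ) * ((r / 2) ^ d * ω.toReal) ≤ (volume W).toReal := by
    intro F hFΩ hFsep
    have hdisj : (↑F : Set (EuclideanSpace ℝ (Fin d))).PairwiseDisjoint (fun p => ball p (r / 2)) := by
      intro p hp q hq hpq
      exact ball_disjoint_ball (by linarith [hFsep hp hq hpq])
    have hsum : ∑ p ∈ F, volume (ball p (r / 2)) = volume (⋃ p ∈ F, ball p (r / 2)) :=
      (measure_biUnion_finset hdisj fun p _ => measurableSet_ball).symm
    have hsub : (⋃ p ∈ F, ball p (r / 2)) ⊆ W := by
      intro y hy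
      simp only [Set.mem_iUnion] at hy
      obtain ⟨p, hp, hyp⟩ := hy
      rw [hWdef, Metric.mem_thickening_iff]
      exact ⟨p, hFΩ hp, lt_of_lt_of_le (mem_ball.mp hyp) (by linarith)⟩
    have hball : ∀ p : EuclideanSpace ℝ (Fin d), volume (ball p (r / 2)) = ENNReal.ofReal ((r / 2) ^ d) * ω := by
      intro p
      rw [hω, Measure.addHaar_ball_of_pos volume p (half_pos hr), finrank_euclideanSpace_fin]
    have key : (F.card : ℝ≥0∞) * (ENNReal.ofReal ((r / 2) ^ d) * ω) ≤ volume W := by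
      calc (F.card : ℝ≥0∞) * (ENNReal.ofReal ((r / 2) ^ d) * ω)
          = ∑ _p ∈ F, (ENNReal.ofReal ((r / 2) ^ d) * ω) := by
            rw [Finset.sum_const, nsmul_eq_mul]
        _ = ∑ p ∈ F, volume (ball p (r / 2)) := by
            exact Finset.sum_congr rfl fun p _ => (hball p).symm
        _ = volume (⋃ p ∈ F, ball p (r / 2)) := hsum
        _ ≤ volume W := measure_mono hsub
    have := ENNReal.toReal_mono hWtop key
    rwa [ENNReal.toReal_mul, ENNReal.toReal_mul, ENNReal.toReal_natCast, ENNReal.toReal_ofReal (by positivity : (0:ℝ) ≤ (r/2)^d)] at this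
  obtain ⟨T, hTΩ, hTne, hTsep, hTcov⟩ := exists_net Ω hne hr
  -- T is finite
  have hTfin : T.Finite := by
    by_contra hinf
    replace hinf : T.Infinite := hinf
    set N : ℕ := ⌈(volume W).toReal / ((r / 2) ^ d * ω.toReal)⌉₊ with hN
    obtain ⟨F, hFT, hFfin, hFcard⟩ := hinf.exists_subset_ncard_eq (N + 1)
    have hsep' : (↑hFfin.toFinset : Set (EuclideanSpace ℝ (Fin d))).Pairwise fun x y => r ≤ dist x y := by
      rw [Set.Finite.coe_toFinset]
      exact hTsep.mono hFT
    have hp := pack hFfin.toFinset (by rw [Set.Finite.coe_toFinset]; exact hFT.trans hTΩ) hsep'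
    have hcard : hFfin.toFinset.card = N + 1 := by
      rw [← Set.ncard_coe_finset, Set.Finite.coe_toFinset]; exact hFcard
    rw [hcard] at hp
    have hx : (0 : ℝ) < (r / 2) ^ d * ω.toReal := by positivity
    have h1 : ((N : ℝ) + 1) ≤ (volume W).toReal / ((r / 2) ^ d * ω.toReal) := by
      rw [le_div_iff₀ hx]
      push_cast at hp ⊢
      linarith
    have h2 : (volume W).toReal / ((r / 2) ^ d * ω.toReal) ≤ (N : ℝ) := Nat.le_ceil _
    linarith
  refine ⟨hTfin.toFinset, by rw [Set.Finite.coe_toFinset]; exact hTΩ,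
    (Set.Finite.toFinset_nonempty _).mpr hTne, ?_, ?_⟩
  · have hp := pack hTfin.toFinset (by rw [Set.Finite.coe_toFinset]; exact hTΩ)
      (by rw [Set.Finite.coe_toFinset]; exact hTsep)
    rw [le_div_iff₀ hw0]
    have h2d : (0:ℝ) < 2 ^ d := by positivity
    have := mul_le_mul_of_nonneg_right hp h2d.le
    calc (hTfin.toFinset.card : ℝ) * r ^ d * ω.toReal
        = (hTfin.toFinset.card : ℝ) * ((r / 2) ^ d * ω.toReal) * 2 ^ d := by
          field_simp; rw [mul_assoc, ← mul_pow]; norm_num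
      _ ≤ (volume W).toReal * 2 ^ d := this
  · intro x hx
    obtain ⟨t, ht, hdt⟩ := hTcov x hx
    refine (Metric.infDist_le_dist_of_mem ?_).trans hdt.le
    simpa using ht

lemma distLp_nonneg {d : ℕ} (γ : ℝ≥0∞) (Ω S : Set (EuclideanSpace ℝ (Fin d))) :
    0 ≤ distLp γ Ω S := by
  unfold distLp
  split
  · exact Real.iSup_nonneg fun x => Real.iSup_nonneg fun _ => Metric.infDist_nonneg
  · exact Real.rpow_nonneg
      (integral_nonneg fun x => Real.rpow_nonneg Metric.infDist_nonneg _) _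

lemma distLp_top_le {d : ℕ} (Ω S : Set (EuclideanSpace ℝ (Fin d))) {r : ℝ} (hr : 0 ≤ r)
    (hcov : ∀ x ∈ Ω, Metric.infDist x S ≤ r) : distLp ⊤ Ω S ≤ r := by
  unfold distLp
  rw [if_pos rfl]
  exact Real.iSup_le (fun x => Real.iSup_le (fun hx => hcov x hx) hr) hr

lemma le_distLp_top {d : ℕ} (Ω S : Set (EuclideanSpace ℝ (Fin d))) {s M : ℝ}
    (hM : ∀ x ∈ Ω, Metric.infDist x S ≤ M) {x₀ : EuclideanSpace ℝ (Fin d)} (hx₀ : x₀ ∈ Ω)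
    (hs : s ≤ Metric.infDist x₀ S) : s ≤ distLp ⊤ Ω S := by
  unfold distLp
  rw [if_pos rfl]
  have hbdd : BddAbove (Set.range fun x => ⨆ _ : x ∈ Ω, Metric.infDist x S) := by
    refine ⟨max M 0, ?_⟩
    rintro _ ⟨x, rfl⟩
    exact Real.iSup_le (fun hx => le_max_of_le_left (hM x hx)) (le_max_right _ _)
  calc s ≤ Metric.infDist x₀ S := hs
    _ = ⨆ _ : x₀ ∈ Ω, Metric.infDist x₀ S := by rw [ciSup_pos hx₀]
    _ ≤ ⨆ x, ⨆ _ : x ∈ Ω, Metric.infDist x S := le_ciSup hbdd x₀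

lemma distLp_ne_top_le {d : ℕ} {γ : ℝ≥0∞} (hγ0 : γ ≠ 0) (hγt : γ ≠ ⊤)
    (Ω S : Set (EuclideanSpace ℝ (Fin d))) (hmeas : MeasurableSet Ω)
    (hΩtop : volume Ω ≠ ∞) {r : ℝ} (hr : 0 ≤ r)
    (hcov : ∀ x ∈ Ω, Metric.infDist x S ≤ r) :
    distLp γ Ω S ≤ r * (volume Ω).toReal ^ (1 / γ.toReal) := by
  have ht : 0 < γ.toReal := ENNReal.toReal_pos hγ0 hγt
  set t := γ.toReal with htdef
  unfold distLp
  rw [if_neg hγt]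
  have hgcont : Continuous fun x : EuclideanSpace ℝ (Fin d) => Metric.infDist x S ^ t :=
    (Metric.continuous_infDist_pt S).rpow_const fun x => Or.inr ht.le
  have hint : IntegrableOn (fun x => Metric.infDist x S ^ t) Ω volume := by
    refine Measure.integrableOn_of_bounded (M := r ^ t) hΩtop hgcont.aestronglyMeasurable ?_
    refine (ae_restrict_iff' hmeas).mpr (ae_of_all _ fun x hx => ?_)
    rw [Real.norm_of_nonneg (Real.rpow_nonneg Metric.infDist_nonneg _)]
    exact Real.rpow_le_rpow Metric.infDist_nonneg (hcov x hx) ht.le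
  have hintc : IntegrableOn (fun _ : EuclideanSpace ℝ (Fin d) => r ^ t) Ω volume := by
    exact integrableOn_const hΩtop
  have h1 : (∫ x in Ω, Metric.infDist x S ^ t) ≤ ∫ _x in Ω, r ^ t :=
    setIntegral_mono_on hint hintc hmeas fun x hx =>
      Real.rpow_le_rpow Metric.infDist_nonneg (hcov x hx) ht.le
  have h2 : (∫ _x in Ω, r ^ t) = (volume Ω).toReal * r ^ t := by
    rw [setIntegral_const, smul_eq_mul]; rfl
  have h3 : (∫ x in Ω, Metric.infDist x S ^ t) ^ (1 / t) ≤
      ((volume Ω).toReal * r ^ t) ^ (1 / t) := by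
    apply Real.rpow_le_rpow (integral_nonneg fun x => Real.rpow_nonneg Metric.infDist_nonneg _)
      (h2 ▸ h1) (by positivity)
  refine h3.trans_eq ?_
  rw [Real.mul_rpow ENNReal.toReal_nonneg (Real.rpow_nonneg hr _),
    ← Real.rpow_mul hr, mul_one_div, div_self ht.ne', Real.rpow_one, mul_comm]

lemma le_distLp_ne_top {d : ℕ} {γ : ℝ≥0∞} (hγ0 : γ ≠ 0) (hγt : γ ≠ ⊤)
    (Ω S : Set (EuclideanSpace ℝ (Fin d))) (hmeas : MeasurableSet Ω)
    (hΩtop : volume Ω ≠ ∞) {s M : ℝ} (hs : 0 ≤ s) (hM0 : 0 ≤ M)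
    (hM : ∀ x ∈ Ω, Metric.infDist x S ≤ M)
    (hgood : volume Ω / 2 ≤ volume (Ω ∩ {x | s ≤ Metric.infDist x S})) :
    s * ((volume Ω).toReal / 2) ^ (1 / γ.toReal) ≤ distLp γ Ω S := by
  have ht : 0 < γ.toReal := ENNReal.toReal_pos hγ0 hγt
  set t := γ.toReal with htdef
  set A := Ω ∩ {x | s ≤ Metric.infDist x S} with hA
  have hAsub : A ⊆ Ω := Set.inter_subset_left
  have hAmeas : MeasurableSet A :=
    hmeas.inter (measurableSet_le measurable_const (Metric.continuous_infDist_pt S).measurable)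
  have hAtop : volume A ≠ ∞ := ((measure_mono hAsub).trans_lt hΩtop.lt_top).ne
  unfold distLp
  rw [if_neg hγt]
  have hgcont : Continuous fun x : EuclideanSpace ℝ (Fin d) => Metric.infDist x S ^ t :=
    (Metric.continuous_infDist_pt S).rpow_const fun x => Or.inr ht.le
  have hint : IntegrableOn (fun x => Metric.infDist x S ^ t) Ω volume := by
    refine Measure.integrableOn_of_bounded (M := M ^ t) hΩtop hgcont.aestronglyMeasurable ?_
    refine (ae_restrict_iff' hmeas).mpr (ae_of_all _ fun x hx => ?_)
    rw [Real.norm_of_nonneg (Real.rpow_nonneg Metric.infDist_nonneg _)]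
    exact Real.rpow_le_rpow Metric.infDist_nonneg (hM x hx) ht.le
  have hintc : IntegrableOn (fun _ : EuclideanSpace ℝ (Fin d) => s ^ t) A volume :=
    integrableOn_const hAtop
  have h1 : (volume A).toReal * s ^ t ≤ ∫ x in A, Metric.infDist x S ^ t := by
    rw [← smul_eq_mul, show (volume A).toReal = volume.real A from rfl, ← setIntegral_const]
    exact setIntegral_mono_on hintc (hint.mono_set hAsub) hAmeas fun x hx =>
      Real.rpow_le_rpow hs hx.2 ht.le
  have h2 : (∫ x in A, Metric.infDist x S ^ t) ≤ ∫ x in Ω, Metric.infDist x S ^ t := by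
    apply setIntegral_mono_set hint
      (ae_of_all _ fun x => Real.rpow_nonneg Metric.infDist_nonneg _)
      (HasSubset.Subset.eventuallyLE hAsub)
  have hAv : (volume Ω).toReal / 2 ≤ (volume A).toReal := by
    have := ENNReal.toReal_mono hAtop hgood
    rwa [ENNReal.toReal_div, ENNReal.toReal_ofNat] at this
  have h0 : s ^ t * ((volume Ω).toReal / 2) ≤ ∫ x in Ω, Metric.infDist x S ^ t := by
    refine le_trans ?_ (h1.trans h2)
    rw [mul_comm]
    exact mul_le_mul_of_nonneg_right hAv (Real.rpow_nonneg hs _)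
  calc s * ((volume Ω).toReal / 2) ^ (1 / t)
      = (s ^ t * ((volume Ω).toReal / 2)) ^ (1 / t) := by
        rw [Real.mul_rpow (Real.rpow_nonneg hs _) (by positivity),
          ← Real.rpow_mul hs, mul_one_div, div_self ht.ne', Real.rpow_one]
    _ ≤ (∫ x in Ω, Metric.infDist x S ^ t) ^ (1 / t) :=
        Real.rpow_le_rpow (by positivity) h0 (by positivity)

theorem stmt9 (d : ℕ) (hd : 0 < d) (Ω : Set (EuclideanSpace ℝ (Fin d)))
    (hne : Ω.Nonempty) (hop : IsOpen Ω) (hconv : Convex ℝ Ω)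
    (hbd : Bornology.IsBounded Ω) (γ : ℝ≥0∞) (hγ : 0 < γ) :
    ∃ c C : ℝ, 0 < c ∧ 0 < C ∧
      ∀ n : ℕ, 1 ≤ n →
        c * (n : ℝ) ^ (-(1 / (d : ℝ))) ≤
          sInf {r : ℝ | ∃ P : Finset (EuclideanSpace ℝ (Fin d)),
            ↑P ⊆ Ω ∧ P.Nonempty ∧ P.card ≤ n ∧ r = distLp γ Ω ↑P} ∧
        sInf {r : ℝ | ∃ P : Finset (EuclideanSpace ℝ (Fin d)),
            ↑P ⊆ Ω ∧ P.Nonempty ∧ P.card ≤ n ∧ r = distLp γ Ω ↑P} ≤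
          C * (n : ℝ) ^ (-(1 / (d : ℝ))) := by
  classical
  obtain ⟨x₀, hx₀⟩ := hne
  have hγ0 : γ ≠ 0 := hγ.ne'
  have hdR : ((d : ℝ)) ≠ 0 := by exact_mod_cast hd.ne'
  have hμpos : 0 < volume Ω := hop.measure_pos volume ⟨x₀, hx₀⟩
  have hμtop : volume Ω ≠ ∞ := hbd.measure_lt_top.ne
  have hμR : 0 < (volume Ω).toReal := ENNReal.toReal_pos hμpos.ne' hμtop
  set ω : ℝ≥0∞ := volume (ball (0 : EuclideanSpace ℝ (Fin d)) 1) with hω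
  have hω0 : 0 < ω := measure_ball_pos _ _ one_pos
  have hωtop : ω ≠ ∞ := measure_ball_lt_top.ne
  set D : ℝ := Metric.diam Ω + 1 with hDdef
  have hD0 : 0 < D := by positivity
  have hMb : ∀ S : Set (EuclideanSpace ℝ (Fin d)), S ⊆ Ω → S.Nonempty →
      ∀ x ∈ Ω, Metric.infDist x S ≤ D := by
    rintro S hS ⟨p, hp⟩ x hx
    refine (Metric.infDist_le_dist_of_mem hp).trans ?_
    have := Metric.dist_le_diam_of_mem hbd hx (hS hp)
    rw [hDdef]; linarith
  obtain ⟨K, hK0, hKcov⟩ := exists_covering d Ω ⟨x₀, hx₀⟩ hbd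
  set Mγ : ℝ := if γ = ⊤ then 1 else (volume Ω).toReal ^ (1 / γ.toReal) with hMγ
  have hMγ0 : 0 < Mγ := by
    rw [hMγ]; split
    · norm_num
    · positivity
  set mγ : ℝ := if γ = ⊤ then 1 else ((volume Ω).toReal / 2) ^ (1 / γ.toReal) with hmγ
  have hmγ0 : 0 < mγ := by
    rw [hmγ]; split
    · norm_num
    · positivity
  set q : ℝ≥0∞ := volume Ω / (2 * ω) with hq
  have hq0 : q ≠ 0 := by
    rw [hq]
    exact ENNReal.div_ne_zero.mpr ⟨hμpos.ne', ENNReal.mul_ne_top (by norm_num) hωtop⟩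
  have hqtop : q ≠ ∞ := by
    rw [hq]
    exact (ENNReal.div_lt_top hμtop (by simp [hω0.ne'])).ne
  set a : ℝ := q.toReal ^ (1 / (d : ℝ)) with ha
  have ha0 : 0 < a := Real.rpow_pos_of_pos (ENNReal.toReal_pos hq0 hqtop) _
  have had : a ^ d = q.toReal := by
    rw [ha, ← Real.rpow_natCast (q.toReal ^ (1 / (d : ℝ))) d,
      ← Real.rpow_mul ENNReal.toReal_nonneg, one_div, inv_mul_cancel₀ hdR, Real.rpow_one]
  have hkey : ENNReal.ofReal (a ^ d) * ω = volume Ω / 2 := by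
    rw [had, ENNReal.ofReal_toReal hqtop, hq, div_eq_mul_inv,
      ENNReal.mul_inv (Or.inr hωtop) (Or.inr hω0.ne'), mul_assoc, mul_assoc,
      ENNReal.inv_mul_cancel hω0.ne' hωtop, mul_one, ← div_eq_mul_inv]
  set B : ℝ := max (K ^ (1 / (d : ℝ))) D with hB
  have hB0 : 0 < B := lt_max_of_lt_right hD0
  have hBd : K ≤ B ^ d := by
    calc K = (K ^ (1 / (d : ℝ))) ^ d := by
          rw [← Real.rpow_natCast (K ^ (1 / (d : ℝ))) d, ← Real.rpow_mul hK0.le, one_div,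
            inv_mul_cancel₀ hdR, Real.rpow_one]
      _ ≤ B ^ d := pow_le_pow_left₀ (Real.rpow_nonneg hK0.le _) (le_max_left _ _) d
  refine ⟨a * mγ, B * Mγ, by positivity, by positivity, ?_⟩
  intro n hn
  have hn0 : (0 : ℝ) < n := by exact_mod_cast hn
  set ρ : ℝ := (n : ℝ) ^ (-(1 / (d : ℝ))) with hρ
  have hρ0 : 0 < ρ := Real.rpow_pos_of_pos hn0 _
  have hρd : ρ ^ d = (n : ℝ)⁻¹ := by
    rw [hρ, ← Real.rpow_natCast ((n : ℝ) ^ (-(1 / (d : ℝ)))) d, ← Real.rpow_mul hn0.le,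
      show -(1 / (d : ℝ)) * d = -1 by field_simp, Real.rpow_neg_one]
  -- upper bound construction
  have hup : ∃ P : Finset (EuclideanSpace ℝ (Fin d)), ↑P ⊆ Ω ∧ P.Nonempty ∧ P.card ≤ n ∧
      ∀ x ∈ Ω, Metric.infDist x ↑P ≤ B * ρ := by
    by_cases hcase : B * ρ < D
    · obtain ⟨P, hPΩ, hPne, hPcard, hPcov⟩ := hKcov (B * ρ) (by positivity) (by rw [← hDdef]; exact hcase.le)
      refine ⟨P, hPΩ, hPne, ?_, hPcov⟩
      have h2 : (B * ρ) ^ d = B ^ d * (n : ℝ)⁻¹ := by rw [mul_pow, hρd]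
      have hBdpos : (0 : ℝ) < B ^ d := by positivity
      have h3 : (P.card : ℝ) * B ^ d ≤ K * n := by
        have h := mul_le_mul_of_nonneg_right hPcard hn0.le
        calc (P.card : ℝ) * B ^ d = (P.card : ℝ) * (B * ρ) ^ d * n := by
              rw [h2]; field_simp
          _ ≤ K * n := h
      have h4 : (P.card : ℝ) ≤ n := by
        have h5 : (P.card : ℝ) * B ^ d ≤ (n : ℝ) * B ^ d :=
          h3.trans (by rw [mul_comm (n:ℝ) (B^d)]; exact mul_le_mul_of_nonneg_right hBd hn0.le)
        exact le_of_mul_le_mul_right h5 hBdpos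
      exact_mod_cast h4
    · push_neg at hcase
      refine ⟨{x₀}, by simpa using hx₀, Finset.singleton_nonempty _, by simpa using hn, ?_⟩
      intro x hx
      rw [Finset.coe_singleton, Metric.infDist_singleton]
      have := Metric.dist_le_diam_of_mem hbd hx hx₀
      have hDle : D ≤ B * ρ := hcase
      rw [hDdef] at hDle
      linarith
  obtain ⟨P₀, hP₀Ω, hP₀ne, hP₀c, hP₀cov⟩ := hup
  -- lower bound for all admissible P
  have hlow : ∀ P : Finset (EuclideanSpace ℝ (Fin d)), ↑P ⊆ Ω → P.Nonempty → P.card ≤ n →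
      a * mγ * ρ ≤ distLp γ Ω ↑P := by
    intro P hPΩ hPne hPc
    set s : ℝ := a * ρ with hs
    have hs0 : 0 < s := by positivity
    have hgood : volume Ω / 2 ≤ volume (Ω ∩ {x | s ≤ Metric.infDist x ↑P}) := by
      set bad : Set (EuclideanSpace ℝ (Fin d)) := Ω ∩ {x | Metric.infDist x ↑P < s} with hbad
      have hsplit : Ω ⊆ bad ∪ (Ω ∩ {x | s ≤ Metric.infDist x ↑P}) := by
        intro x hx
        by_cases h : Metric.infDist x ↑P < s
        · exact Or.inl ⟨hx, h⟩
        · exact Or.inr ⟨hx, not_lt.mp h⟩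
      have hbadsub : bad ⊆ ⋃ p ∈ P, ball p s := by
        rintro x ⟨hxΩ, hxlt⟩
        obtain ⟨p, hp, hdp⟩ :=
          (Metric.infDist_lt_iff (Finset.coe_nonempty.mpr hPne)).mp hxlt
        exact Set.mem_biUnion hp (mem_ball.mpr hdp)
      have hsd : (n : ℝ≥0∞) * ENNReal.ofReal (s ^ d) = ENNReal.ofReal (a ^ d) := by
        rw [hs, mul_pow, hρd, ENNReal.ofReal_mul (by positivity),
          ENNReal.ofReal_inv_of_pos hn0, ENNReal.ofReal_natCast, ← mul_assoc,
          mul_comm (n : ℝ≥0∞), mul_assoc,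
          ENNReal.mul_inv_cancel (Nat.cast_ne_zero.mpr (Nat.one_le_iff_ne_zero.mp hn) : (n : ℝ≥0∞) ≠ 0)
            (ENNReal.natCast_ne_top n), mul_one]
      have hbadle : volume bad ≤ volume Ω / 2 := by
        calc volume bad ≤ volume (⋃ p ∈ P, ball p s) := measure_mono hbadsub
          _ ≤ ∑ p ∈ P, volume (ball p s) := measure_biUnion_finset_le _ _
          _ = (P.card : ℝ≥0∞) * (ENNReal.ofReal (s ^ d) * ω) := by
              have hball : ∀ p : EuclideanSpace ℝ (Fin d),
                  volume (ball p s) = ENNReal.ofReal (s ^ d) * ω := fun p => by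
                rw [hω, Measure.addHaar_ball_of_pos volume p hs0, finrank_euclideanSpace_fin]
              simp only [hball]
              rw [Finset.sum_const, nsmul_eq_mul]
          _ ≤ (n : ℝ≥0∞) * (ENNReal.ofReal (s ^ d) * ω) := by
              exact mul_le_mul_left (by exact_mod_cast hPc) _
          _ = ENNReal.ofReal (a ^ d) * ω := by rw [← mul_assoc, hsd]
          _ = volume Ω / 2 := hkey
      have h6 : volume Ω / 2 + volume Ω / 2 ≤ volume Ω / 2 + volume (Ω ∩ {x | s ≤ Metric.infDist x ↑P}) := by
        rw [ENNReal.add_halves]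
        exact (measure_mono hsplit).trans ((measure_union_le _ _).trans
          (add_le_add_left hbadle _))
      exact (ENNReal.add_le_add_iff_left (by
        exact (ENNReal.div_lt_top hμtop (by norm_num)).ne)).mp h6
    by_cases hT : γ = ⊤
    · subst hT
      have hmγ1 : mγ = 1 := by rw [hmγ, if_pos rfl]
      rw [hmγ1, mul_one]
      have hpos : (0 : ℝ≥0∞) < volume Ω / 2 := ENNReal.div_pos hμpos.ne' (by norm_num)
      obtain ⟨y, hyΩ, hys⟩ := nonempty_of_measure_ne_zero (hpos.trans_le hgood).ne'
      exact le_distLp_top Ω (↑P) (hMb ↑P hPΩ (Finset.coe_nonempty.mpr hPne)) hyΩ hys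
    · have hmγ2 : mγ = ((volume Ω).toReal / 2) ^ (1 / γ.toReal) := by rw [hmγ, if_neg hT]
      have := le_distLp_ne_top hγ0 hT Ω (↑P) hop.measurableSet hμtop hs0.le hD0.le
        (hMb ↑P hPΩ (Finset.coe_nonempty.mpr hPne)) hgood
      rw [hmγ2]
      calc a * ((volume Ω).toReal / 2) ^ (1 / γ.toReal) * ρ
          = s * ((volume Ω).toReal / 2) ^ (1 / γ.toReal) := by rw [hs]; ring
        _ ≤ distLp γ Ω ↑P := this
  -- the value of the upper construction
  have hval : distLp γ Ω ↑P₀ ≤ B * Mγ * ρ := by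
    by_cases hT : γ = ⊤
    · subst hT
      have hMγ1 : Mγ = 1 := by rw [hMγ, if_pos rfl]
      rw [hMγ1, mul_one]
      exact (distLp_top_le Ω (↑P₀) (by positivity) hP₀cov).trans_eq rfl
    · have hMγ2 : Mγ = (volume Ω).toReal ^ (1 / γ.toReal) := by rw [hMγ, if_neg hT]
      have := distLp_ne_top_le hγ0 hT Ω (↑P₀) hop.measurableSet hμtop (by positivity : (0:ℝ) ≤ B * ρ) hP₀cov
      rw [hMγ2]
      calc distLp γ Ω ↑P₀ ≤ B * ρ * (volume Ω).toReal ^ (1 / γ.toReal) := this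
        _ = B * (volume Ω).toReal ^ (1 / γ.toReal) * ρ := by ring
  have hbdd : BddBelow {r : ℝ | ∃ P : Finset (EuclideanSpace ℝ (Fin d)),
      ↑P ⊆ Ω ∧ P.Nonempty ∧ P.card ≤ n ∧ r = distLp γ Ω ↑P} := by
    refine ⟨0, ?_⟩
    rintro b ⟨P, -, -, -, rfl⟩
    exact distLp_nonneg _ _ _
  constructor
  · refine le_csInf ⟨distLp γ Ω ↑P₀, P₀, hP₀Ω, hP₀ne, hP₀c, rfl⟩ ?_
    rintro b ⟨P, hPΩ, hPne, hPc, rfl⟩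
    exact hlow P hPΩ hPne hPc
  · exact csInf_le_of_le hbdd ⟨P₀, hP₀Ω, hP₀ne, hP₀c, rfl⟩ hval
end
end

section
/- Let μ be a Borel probability measure on ℝ^d that is absolutely continuous with respect to Lebesgue measure, let 0 < r < ∞, and let P_n = {x₁, …, x_n} ⊂ ℝ^d be a finite set of n distinct points. Then, as identities in [0, ∞]: inf over probability vectors a = (a₁, …, a_n) (a_i ≥ 0, ∑ a_i = 1) of inf over couplings π of (μ, ∑_i a_i δ_{x_i}) of ∫_{ℝ^d×ℝ^d} ‖x − y‖₂^r dπ(x,y) equals ∫_{ℝ^d} min_{1≤i≤n} ‖x − x_i‖₂^r dμ(x). Moreover, the infimum over weights is attained at the Voronoi weights: for any measurable partition C₁, …, C_n of ℝ^d with C_i ⊆ { x : ‖x − x_i‖₂ = dist(x, P_n) } for each i, the weights a_i = μ(C_i) satisfy inf over couplings π of (μ, ∑_i a_i δ_{x_i}) of ∫ ‖x − y‖₂^r dπ(x,y) = ∫ min_i ‖x − x_i‖₂^r dμ(x). -/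
open MeasureTheory Real
open scoped ENNReal NNReal

noncomputable section

private lemma lowerBound12 {d n : ℕ} (μ : Measure (EuclideanSpace ℝ (Fin d)))
    (r : ℝ) (hr : 0 < r) (x : Fin n → EuclideanSpace ℝ (Fin d))
    (a : Fin n → ℝ≥0∞)
    (T : Measure (EuclideanSpace ℝ (Fin d) × EuclideanSpace ℝ (Fin d)))
    (h1 : T.map Prod.fst = μ)
    (h2 : T.map Prod.snd = ∑ i, a i • Measure.dirac (x i)) :
    ∫⁻ y, ENNReal.ofReal (Metric.infDist y (Set.range x) ^ r) ∂μ ≤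
      ∫⁻ z, ENNReal.ofReal (dist z.1 z.2 ^ r) ∂T := by
  have hS : IsClosed (Set.range x) := (Set.finite_range x).isClosed
  have h0 : T {z | z.2 ∉ Set.range x} = 0 := by
    have h3 : T.map Prod.snd ((Set.range x)ᶜ) = 0 := by
      rw [h2]
      simp [Measure.finset_sum_apply, Measure.dirac_apply,
        Set.indicator_of_notMem, Set.mem_range]
    rwa [Measure.map_apply measurable_snd hS.measurableSet.compl] at h3
  have hae : ∀ᵐ z ∂T, z.2 ∈ Set.range x := by
    rw [ae_iff]; exact h0
  have hm : Measurable fun y : EuclideanSpace ℝ (Fin d) =>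
      ENNReal.ofReal (Metric.infDist y (Set.range x) ^ r) :=
    (((Metric.continuous_infDist_pt (Set.range x)).rpow_const (fun _ => Or.inr hr.le)).measurable).ennreal_ofReal
  calc ∫⁻ y, ENNReal.ofReal (Metric.infDist y (Set.range x) ^ r) ∂μ
      = ∫⁻ z, ENNReal.ofReal (Metric.infDist z.1 (Set.range x) ^ r) ∂T := by
        rw [← h1, lintegral_map hm measurable_fst]
    _ ≤ _ := lintegral_mono_ae (hae.mono fun z hz =>
        ENNReal.ofReal_le_ofReal (Real.rpow_le_rpow Metric.infDist_nonneg
          (Metric.infDist_le_dist_of_mem hz) hr.le))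
private lemma keyLemma12 {d n : ℕ} (μ : Measure (EuclideanSpace ℝ (Fin d)))
    [IsProbabilityMeasure μ] (r : ℝ) (hr : 0 < r)
    (x : Fin n → EuclideanSpace ℝ (Fin d))
    (C : Fin n → Set (EuclideanSpace ℝ (Fin d)))
    (hmeas : ∀ i, MeasurableSet (C i))
    (hdisj : Pairwise (Function.onFun Disjoint C))
    (hcov : (⋃ i, C i) = Set.univ)
    (hsub : ∀ i, C i ⊆ {y | dist y (x i) = Metric.infDist y (Set.range x)}) :
    (⨅ (T : Measure (EuclideanSpace ℝ (Fin d) × EuclideanSpace ℝ (Fin d)))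
        (_ : T.map Prod.fst = μ ∧
             T.map Prod.snd = ∑ i, μ (C i) • Measure.dirac (x i)),
        ∫⁻ z, ENNReal.ofReal (dist z.1 z.2 ^ r) ∂T) =
      ∫⁻ y, ENNReal.ofReal (Metric.infDist y (Set.range x) ^ r) ∂μ := by
  classical
  set f : EuclideanSpace ℝ (Fin d) → EuclideanSpace ℝ (Fin d) :=
    fun y => ∑ i, (C i).indicator (fun _ => x i) y with hfdef
  have hf : Measurable f :=
    Finset.measurable_sum _ fun i _ => measurable_const.indicator (hmeas i)
  have hfC : ∀ i, ∀ y ∈ C i, f y = x i := by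
    intro i y hy
    show (∑ j, (C j).indicator (fun _ => x j) y) = x i
    rw [Finset.sum_eq_single_of_mem i (Finset.mem_univ i)]
    · simp [Set.indicator_of_mem hy]
    · intro j _ hj
      have hyj : y ∉ C j := fun hyj => Set.disjoint_left.mp (hdisj hj) hyj hy
      simp [Set.indicator_of_notMem hyj]
  set T : Measure (EuclideanSpace ℝ (Fin d) × EuclideanSpace ℝ (Fin d)) :=
    μ.map (fun y => (y, f y)) with hTdef
  have hg : Measurable fun y : EuclideanSpace ℝ (Fin d) => (y, f y) :=
    measurable_id.prodMk hf
  have hT1 : T.map Prod.fst = μ := by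
    rw [hTdef, Measure.map_map measurable_fst hg]
    have h : (Prod.fst ∘ fun y : EuclideanSpace ℝ (Fin d) => (y, f y)) = id := rfl
    rw [h, Measure.map_id]
  have hT2 : T.map Prod.snd = ∑ i, μ (C i) • Measure.dirac (x i) := by
    rw [hTdef, Measure.map_map measurable_snd hg]
    have : (Prod.snd ∘ fun y : EuclideanSpace ℝ (Fin d) => (y, f y)) = f := rfl
    rw [this]
    ext s hs
    rw [Measure.map_apply hf hs]
    have hcover' : f ⁻¹' s = ⋃ i, (f ⁻¹' s ∩ C i) := by
      rw [← Set.inter_iUnion, hcov, Set.inter_univ]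
    rw [hcover', measure_iUnion
      (fun i j hij => ((hdisj hij).mono Set.inter_subset_right Set.inter_subset_right))
      (fun i => (hf hs).inter (hmeas i)), tsum_fintype]
    rw [Measure.finset_sum_apply]
    refine Finset.sum_congr rfl fun i _ => ?_
    rw [Measure.smul_apply, Measure.dirac_apply, smul_eq_mul]
    by_cases hxi : x i ∈ s
    · have : f ⁻¹' s ∩ C i = C i := by
        apply Set.inter_eq_self_of_subset_right
        intro y hy
        simp only [Set.mem_preimage, hfC i y hy]
        exact hxi
      rw [this, Set.indicator_of_mem hxi, Pi.one_apply, mul_one]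
    · have : f ⁻¹' s ∩ C i = ∅ := by
        ext y
        simp only [Set.mem_inter_iff, Set.mem_preimage, Set.mem_empty_iff_false, iff_false]
        rintro ⟨hys, hyC⟩
        exact hxi (by rwa [hfC i y hyC] at hys)
      rw [this, Set.indicator_of_notMem hxi, measure_empty, mul_zero]
  have hcost : ∫⁻ z, ENNReal.ofReal (dist z.1 z.2 ^ r) ∂T =
      ∫⁻ y, ENNReal.ofReal (Metric.infDist y (Set.range x) ^ r) ∂μ := by
    have hmcost : Measurable fun z : EuclideanSpace ℝ (Fin d) × EuclideanSpace ℝ (Fin d) =>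
        ENNReal.ofReal (dist z.1 z.2 ^ r) :=
      (((continuous_fst.dist continuous_snd).rpow_const
        (fun _ => Or.inr hr.le)).measurable).ennreal_ofReal
    rw [hTdef, lintegral_map hmcost hg]
    refine lintegral_congr fun y => ?_
    obtain ⟨i, hyi⟩ : ∃ i, y ∈ C i := by
      have : y ∈ ⋃ i, C i := by rw [hcov]; trivial
      exact Set.mem_iUnion.mp this
    simp only
    rw [hfC i y hyi, hsub i hyi]
  refine le_antisymm ?_ ?_
  · exact iInf_le_of_le T (iInf_le_of_le ⟨hT1, hT2⟩ hcost.le)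
  · refine le_iInf fun T' => le_iInf fun h => ?_
    exact lowerBound12 μ r hr x (fun i => μ (C i)) T' h.1 h.2

theorem stmt12 (d n : ℕ) (hn : 1 ≤ n)
    (μ : Measure (EuclideanSpace ℝ (Fin d))) [IsProbabilityMeasure μ]
    (hac : μ ≪ volume) (r : ℝ) (hr : 0 < r)
    (x : Fin n → EuclideanSpace ℝ (Fin d)) (hinj : Function.Injective x) :
    -- the doubly-infimized optimal transportation cost equals the distortion:
    (⨅ (a : Fin n → ℝ≥0∞) (_ : ∑ i, a i = 1),
      ⨅ (T : Measure (EuclideanSpace ℝ (Fin d) × EuclideanSpace ℝ (Fin d)))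
        (_ : T.map Prod.fst = μ ∧
             T.map Prod.snd = ∑ i, a i • Measure.dirac (x i)),
        ∫⁻ z, ENNReal.ofReal (dist z.1 z.2 ^ r) ∂T) =
      ∫⁻ y, ENNReal.ofReal (Metric.infDist y (Set.range x) ^ r) ∂μ ∧
    -- and the infimum over the weights is attained at the Voronoi weights:
    ∀ C : Fin n → Set (EuclideanSpace ℝ (Fin d)),
      (∀ i, MeasurableSet (C i)) →
      (Pairwise (Function.onFun Disjoint C)) →
      (⋃ i, C i) = Set.univ →
      (∀ i, C i ⊆ {y | dist y (x i) = Metric.infDist y (Set.range x)}) →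
      (⨅ (T : Measure (EuclideanSpace ℝ (Fin d) × EuclideanSpace ℝ (Fin d)))
        (_ : T.map Prod.fst = μ ∧
             T.map Prod.snd = ∑ i, μ (C i) • Measure.dirac (x i)),
        ∫⁻ z, ENNReal.ofReal (dist z.1 z.2 ^ r) ∂T) =
      ∫⁻ y, ENNReal.ofReal (Metric.infDist y (Set.range x) ^ r) ∂μ := by
  classical
  haveI : NeZero n := ⟨Nat.one_le_iff_ne_zero.mp hn⟩
  constructor
  · -- construct a measurable Voronoi partition
    set D : Fin n → Set (EuclideanSpace ℝ (Fin d)) :=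
      fun i => ⋂ j, {y | dist y (x i) ≤ dist y (x j)} with hDdef
    have hDclosed : ∀ i, IsClosed (D i) :=
      fun i => isClosed_iInter fun j =>
        isClosed_le (continuous_id.dist continuous_const) (continuous_id.dist continuous_const)
    have hDmem : ∀ i y, y ∈ D i ↔ ∀ j, dist y (x i) ≤ dist y (x j) := by
      intro i y; simp [hDdef]
    set C : Fin n → Set (EuclideanSpace ℝ (Fin d)) :=
      fun i => D i ∩ ⋂ j, ⋂ (_ : j < i), (D j)ᶜ with hCdef
    have hmeas : ∀ i, MeasurableSet (C i) := by
      intro i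
      exact (hDclosed i).measurableSet.inter
        (MeasurableSet.iInter fun j => MeasurableSet.iInter fun _ =>
          (hDclosed j).measurableSet.compl)
    have hCD : ∀ i, C i ⊆ D i := fun i => Set.inter_subset_left
    have hCnot : ∀ i j, j < i → ∀ y ∈ C i, y ∉ D j := by
      intro i j hji y hy
      have := hy.2
      exact Set.mem_iInter.mp (Set.mem_iInter.mp this j) hji
    have hdisj : Pairwise (Function.onFun Disjoint C) := by
      intro i j hij
      rcases lt_or_gt_of_ne hij with h | h
      · exact Set.disjoint_left.mpr fun y hyi hyj => hCnot j i h y hyj (hCD i hyi)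
      · exact Set.disjoint_left.mpr fun y hyi hyj => hCnot i j h y hyi (hCD j hyj)
    have hcov : (⋃ i, C i) = Set.univ := by
      ext y
      simp only [Set.mem_iUnion, Set.mem_univ, iff_true]
      have hne : (Finset.univ.filter (fun i => y ∈ D i)).Nonempty := by
        obtain ⟨i₀, _, hi₀⟩ := Finset.exists_min_image Finset.univ
          (fun i => dist y (x i)) ⟨⟨0, hn⟩, Finset.mem_univ _⟩
        exact ⟨i₀, Finset.mem_filter.mpr ⟨Finset.mem_univ _,
          (hDmem i₀ y).mpr fun j => hi₀ j (Finset.mem_univ j)⟩⟩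
      set i₁ := (Finset.univ.filter (fun i => y ∈ D i)).min' hne with hi₁def
      have hmem : y ∈ D i₁ :=
        (Finset.mem_filter.mp ((Finset.univ.filter (fun i => y ∈ D i)).min'_mem hne)).2
      refine ⟨i₁, hmem, ?_⟩
      refine Set.mem_iInter.mpr fun j => Set.mem_iInter.mpr fun hj => fun hyj => ?_
      have : i₁ ≤ j := Finset.min'_le _ j (Finset.mem_filter.mpr ⟨Finset.mem_univ _, hyj⟩)
      exact absurd this (not_le.mpr hj)
    have hsub : ∀ i, C i ⊆ {y | dist y (x i) = Metric.infDist y (Set.range x)} := by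
      intro i y hy
      have hD := (hDmem i y).mp (hCD i hy)
      have hne : (Set.range x).Nonempty := Set.range_nonempty x
      refine le_antisymm (not_lt.mp fun hlt => ?_) (Metric.infDist_le_dist_of_mem ⟨i, rfl⟩)
      obtain ⟨z, ⟨j, rfl⟩, hz⟩ := (Metric.infDist_lt_iff hne).mp hlt
      exact absurd hz (not_lt.mpr (hD j))
    have hsum : ∑ i, μ (C i) = 1 := by
      rw [← tsum_fintype (L := .unconditional _), ← measure_iUnion hdisj hmeas, hcov, measure_univ]
    refine le_antisymm ?_ ?_
    · refine iInf_le_of_le (fun i => μ (C i)) (iInf_le_of_le hsum ?_)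
      exact (keyLemma12 μ r hr x C hmeas hdisj hcov hsub).le
    · refine le_iInf fun a => le_iInf fun _ => le_iInf fun T => le_iInf fun h => ?_
      exact lowerBound12 μ r hr x a T h.1 h.2
  · intro C hmeas hdisj hcov hsub
    exact keyLemma12 μ r hr x C hmeas hdisj hcov hsub
end
end

section
/- Let 0 < s ≤ 1, let μ be a Borel probability measure on ℝ^d with ∫ ‖x‖₂^s dμ(x) < ∞, and let P_n = {x₁, …, x_n} ⊂ ℝ^d be a finite set of n distinct points. Then inf over weight vectors a = (a₁, …, a_n) ∈ ℝⁿ of sup over all functions f : ℝ^d → ℝ satisfying |f(x) − f(y)| ≤ ‖x − y‖₂^s for all x, y ∈ ℝ^d of |∫_{ℝ^d} f dμ − ∑_{i=1}^n a_i f(x_i)| equals the distortion D_{μ,P_n,s} = ∫_{ℝ^d} dist(x, P_n)^s dμ(x). Moreover, the infimum is attained at the Voronoi weights a_i = μ(C_i), for any measurable partition C₁, …, C_n of ℝ^d with C_i ⊆ { x : ‖x − x_i‖₂ = dist(x, P_n) } for each i. -/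
open MeasureTheory
open scoped ENNReal NNReal

noncomputable section

private lemma add_rpow_le' (s : ℝ) (hs0 : 0 ≤ s) (hs1 : s ≤ 1) {a b : ℝ} (ha : 0 ≤ a)
    (hb : 0 ≤ b) : (a + b) ^ s ≤ a ^ s + b ^ s := by
  have h := NNReal.rpow_add_le_add_rpow a.toNNReal b.toNNReal hs0 hs1
  have h' := NNReal.coe_le_coe.2 h
  push_cast at h'
  rwa [Real.coe_toNNReal _ ha, Real.coe_toNNReal _ hb] at h'

private lemma abs_rpow_sub_rpow_le' (s : ℝ) (hs0 : 0 < s) (hs1 : s ≤ 1) {a b : ℝ} (ha : 0 ≤ a)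
    (hb : 0 ≤ b) : |a ^ s - b ^ s| ≤ |a - b| ^ s := by
  wlog hab : b ≤ a generalizing a b
  · rw [abs_sub_comm, abs_sub_comm a b]; exact this hb ha (le_of_not_ge hab)
  have h1 : a ^ s ≤ (a - b) ^ s + b ^ s := by
    have := add_rpow_le' s hs0.le hs1 (sub_nonneg.2 hab) hb
    rwa [sub_add_cancel] at this
  have h2 : b ^ s ≤ a ^ s := Real.rpow_le_rpow hb hab hs0.le
  rw [abs_of_nonneg (sub_nonneg.2 h2), abs_of_nonneg (sub_nonneg.2 hab)]
  linarith

private lemma continuous_of_holder' {E : Type*} [PseudoMetricSpace E] {s : ℝ} (hs0 : 0 < s)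
    {f : E → ℝ} (hf : ∀ y z, |f y - f z| ≤ dist y z ^ s) : Continuous f := by
  rw [Metric.continuous_iff]
  intro b ε hε
  refine ⟨ε ^ s⁻¹, Real.rpow_pos_of_pos hε _, fun a hab => ?_⟩
  calc dist (f a) (f b) = |f a - f b| := Real.dist_eq _ _
    _ ≤ dist a b ^ s := hf a b
    _ < (ε ^ s⁻¹) ^ s := Real.rpow_lt_rpow dist_nonneg hab hs0
    _ = ε := Real.rpow_inv_rpow hε.le hs0.ne'

theorem stmt13 (d n : ℕ) (hn : 1 ≤ n) (s : ℝ) (hs0 : 0 < s) (hs1 : s ≤ 1)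
    (μ : Measure (EuclideanSpace ℝ (Fin d))) [IsProbabilityMeasure μ]
    (hmom : ∫⁻ y, ENNReal.ofReal (‖y‖ ^ s) ∂μ < ⊤)
    (x : Fin n → EuclideanSpace ℝ (Fin d)) (hinj : Function.Injective x) :
    -- the minimal worst-case error over functions of s-Hölder seminorm ≤ 1 equals the
    -- distortion:
    (⨅ a : Fin n → ℝ,
      ⨆ f : {f : EuclideanSpace ℝ (Fin d) → ℝ // ∀ y z, |f y - f z| ≤ dist y z ^ s},
        ENNReal.ofReal |(∫ y, f.1 y ∂μ) - ∑ i, a i * f.1 (x i)|) =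
      ∫⁻ y, ENNReal.ofReal (Metric.infDist y (Set.range x) ^ s) ∂μ ∧
    -- and the infimum is attained at the Voronoi weights:
    ∀ C : Fin n → Set (EuclideanSpace ℝ (Fin d)),
      (∀ i, MeasurableSet (C i)) →
      (Pairwise (Function.onFun Disjoint C)) →
      (⋃ i, C i) = Set.univ →
      (∀ i, C i ⊆ {y | dist y (x i) = Metric.infDist y (Set.range x)}) →
      (⨆ f : {f : EuclideanSpace ℝ (Fin d) → ℝ // ∀ y z, |f y - f z| ≤ dist y z ^ s},
        ENNReal.ofReal |(∫ y, f.1 y ∂μ) - ∑ i, (μ (C i)).toReal * f.1 (x i)|) =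
      ∫⁻ y, ENNReal.ofReal (Metric.infDist y (Set.range x) ^ s) ∂μ := by
  classical
  have hRne : (Set.range x).Nonempty := ⟨x ⟨0, hn⟩, Set.mem_range_self _⟩
  have hRcomp : IsCompact (Set.range x) := (Set.finite_range x).isCompact
  have hg0 : ∀ y, (0:ℝ) ≤ Metric.infDist y (Set.range x) := fun y => Metric.infDist_nonneg
  have hh0 : ∀ y, (0:ℝ) ≤ Metric.infDist y (Set.range x) ^ s :=
    fun y => Real.rpow_nonneg (hg0 y) s
  -- the distortion-function is Hölder:
  have hholder : ∀ y z : EuclideanSpace ℝ (Fin d),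
      |Metric.infDist y (Set.range x) ^ s - Metric.infDist z (Set.range x) ^ s| ≤
        dist y z ^ s := by
    intro y z
    refine (abs_rpow_sub_rpow_le' s hs0 hs1 (hg0 y) (hg0 z)).trans ?_
    refine Real.rpow_le_rpow (abs_nonneg _) ?_ hs0.le
    rw [abs_sub_le_iff]
    constructor
    · have := Metric.infDist_le_infDist_add_dist (x := y) (y := z) (s := Set.range x)
      linarith
    · have := Metric.infDist_le_infDist_add_dist (x := z) (y := y) (s := Set.range x)
      rw [dist_comm z y] at this; linarith
  -- integrability of ‖·‖^s
  have hnormInt : Integrable (fun y : EuclideanSpace ℝ (Fin d) => ‖y‖ ^ s) μ := by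
    refine ⟨(continuous_norm.rpow_const fun y => Or.inr hs0.le).aestronglyMeasurable, ?_⟩
    rw [hasFiniteIntegral_iff_ofReal
      (Filter.Eventually.of_forall fun y => Real.rpow_nonneg (norm_nonneg y) s)]
    exact hmom
  -- every Hölder function is integrable
  have hIntOfHolder : ∀ f : EuclideanSpace ℝ (Fin d) → ℝ,
      (∀ y z, |f y - f z| ≤ dist y z ^ s) → Integrable f μ := by
    intro f hf
    have hc : Continuous f := continuous_of_holder' hs0 hf
    refine (hnormInt.add (integrable_const (|f 0|))).mono' hc.aestronglyMeasurable
      (Filter.Eventually.of_forall fun y => ?_)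
    have h1 : |f y| ≤ |f y - f 0| + |f 0| := by
      calc |f y| = |(f y - f 0) + f 0| := by ring_nf
        _ ≤ |f y - f 0| + |f 0| := abs_add_le _ _
    have h2 : |f y - f 0| ≤ ‖y‖ ^ s := by
      have := hf y 0
      rwa [dist_zero_right] at this
    rw [Real.norm_eq_abs]
    show |f y| ≤ ‖y‖ ^ s + |f 0|
    linarith
  have hInth : Integrable (fun y => Metric.infDist y (Set.range x) ^ s) μ :=
    hIntOfHolder _ hholder
  have hD : ENNReal.ofReal (∫ y, Metric.infDist y (Set.range x) ^ s ∂μ) =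
      ∫⁻ y, ENNReal.ofReal (Metric.infDist y (Set.range x) ^ s) ∂μ :=
    ofReal_integral_eq_lintegral_ofReal hInth (Filter.Eventually.of_forall hh0)
  -- value of the functional at the distortion function, for any weights
  have hval : ∀ c : Fin n → ℝ,
      ENNReal.ofReal |(∫ y, Metric.infDist y (Set.range x) ^ s ∂μ) -
        ∑ i, c i * Metric.infDist (x i) (Set.range x) ^ s| =
      ∫⁻ y, ENNReal.ofReal (Metric.infDist y (Set.range x) ^ s) ∂μ := by
    intro c
    have hz : ∑ i, c i * Metric.infDist (x i) (Set.range x) ^ s = 0 :=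
      Finset.sum_eq_zero fun i _ => by
        rw [Metric.infDist_zero_of_mem (Set.mem_range_self i), Real.zero_rpow hs0.ne', mul_zero]
    rw [hz, sub_zero, abs_of_nonneg (integral_nonneg hh0), hD]
  -- the key computation: for Voronoi weights the sup equals the distortion
  have key : ∀ C : Fin n → Set (EuclideanSpace ℝ (Fin d)),
      (∀ i, MeasurableSet (C i)) →
      (Pairwise (Function.onFun Disjoint C)) →
      (⋃ i, C i) = Set.univ →
      (∀ i, C i ⊆ {y | dist y (x i) = Metric.infDist y (Set.range x)}) →
      (⨆ f : {f : EuclideanSpace ℝ (Fin d) → ℝ // ∀ y z, |f y - f z| ≤ dist y z ^ s},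
        ENNReal.ofReal |(∫ y, f.1 y ∂μ) - ∑ i, (μ (C i)).toReal * f.1 (x i)|) =
      ∫⁻ y, ENNReal.ofReal (Metric.infDist y (Set.range x) ^ s) ∂μ := by
    intro C hCm hCd hCu hCsub
    apply le_antisymm
    · refine iSup_le fun f => ?_
      rw [← hD]
      refine ENNReal.ofReal_le_ofReal ?_
      have hfi : Integrable f.1 μ := hIntOfHolder f.1 f.2
      have hsplit : ∀ F : EuclideanSpace ℝ (Fin d) → ℝ, Integrable F μ →
          ∫ y, F y ∂μ = ∑ i, ∫ y in C i, F y ∂μ := by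
        intro F hF
        rw [← setIntegral_univ (f := F) (μ := μ), ← hCu,
          integral_iUnion hCm hCd hF.integrableOn, tsum_fintype]
      rw [hsplit f.1 hfi, hsplit _ hInth]
      have hterm : ∀ i, (μ (C i)).toReal * f.1 (x i) = ∫ _ in C i, f.1 (x i) ∂μ := by
        intro i
        rw [setIntegral_const, smul_eq_mul]
        rfl
      calc |(∑ i, ∫ y in C i, f.1 y ∂μ) - ∑ i, (μ (C i)).toReal * f.1 (x i)|
          = |∑ i, ∫ y in C i, (f.1 y - f.1 (x i)) ∂μ| := by
            rw [← Finset.sum_sub_distrib]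
            congr 1
            refine Finset.sum_congr rfl fun i _ => ?_
            rw [hterm i, ← integral_sub hfi.integrableOn
              (integrableOn_const (measure_lt_top μ _).ne)]
        _ ≤ ∑ i, |∫ y in C i, (f.1 y - f.1 (x i)) ∂μ| := Finset.abs_sum_le_sum_abs _ _
        _ ≤ ∑ i, ∫ y in C i, Metric.infDist y (Set.range x) ^ s ∂μ := by
            refine Finset.sum_le_sum fun i _ => ?_
            calc |∫ y in C i, (f.1 y - f.1 (x i)) ∂μ|
                ≤ ∫ y in C i, |f.1 y - f.1 (x i)| ∂μ := by
                  simpa [Real.norm_eq_abs] using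
                    norm_integral_le_integral_norm (μ := μ.restrict (C i))
                      (f := fun y => f.1 y - f.1 (x i))
              _ ≤ ∫ y in C i, Metric.infDist y (Set.range x) ^ s ∂μ := by
                  refine setIntegral_mono_on
                    ((hfi.sub (integrable_const _)).abs.integrableOn)
                    hInth.integrableOn (hCm i) fun y hy => ?_
                  have hyP : dist y (x i) = Metric.infDist y (Set.range x) := hCsub i hy
                  calc |f.1 y - f.1 (x i)| ≤ dist y (x i) ^ s := f.2 y (x i)
                    _ = Metric.infDist y (Set.range x) ^ s := by rw [hyP]
    · refine le_iSup_of_le ⟨fun y => Metric.infDist y (Set.range x) ^ s, hholder⟩ ?_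
      exact (hval fun i => (μ (C i)).toReal).ge
  refine ⟨le_antisymm ?_ ?_, key⟩
  · -- construct a measurable Voronoi partition
    set P : Fin n → Set (EuclideanSpace ℝ (Fin d)) :=
      fun i => {y | dist y (x i) = Metric.infDist y (Set.range x)} with hP
    have hPm : ∀ i, MeasurableSet (P i) := fun i =>
      (isClosed_eq (continuous_id.dist continuous_const)
        (Metric.continuous_infDist_pt _)).measurableSet
    set C : Fin n → Set (EuclideanSpace ℝ (Fin d)) :=
      fun i => P i \ ⋃ j, ⋃ (_ : j < i), P j with hC
    have hCm : ∀ i, MeasurableSet (C i) := fun i =>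
      (hPm i).diff (MeasurableSet.iUnion fun j => MeasurableSet.iUnion fun _ => hPm j)
    have hCd : Pairwise (Function.onFun Disjoint C) := by
      intro i j hij
      rcases hij.lt_or_gt with hlt | hlt
      · exact Set.disjoint_left.2 fun y hyi hyj =>
          hyj.2 (Set.mem_iUnion.2 ⟨i, Set.mem_iUnion.2 ⟨hlt, hyi.1⟩⟩)
      · exact Set.disjoint_left.2 fun y hyi hyj =>
          hyi.2 (Set.mem_iUnion.2 ⟨j, Set.mem_iUnion.2 ⟨hlt, hyj.1⟩⟩)
    have hCu : (⋃ i, C i) = Set.univ := by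
      ext y
      simp only [Set.mem_univ, iff_true, Set.mem_iUnion]
      have hex : ∃ i, y ∈ P i := by
        obtain ⟨z, hzR, hz⟩ := hRcomp.exists_infDist_eq_dist hRne y
        obtain ⟨i, rfl⟩ := hzR
        exact ⟨i, hz.symm⟩
      obtain ⟨i, hi⟩ := hex
      set T := Finset.univ.filter fun i => y ∈ P i with hT
      have hTne : T.Nonempty := ⟨i, by simp [hT, hi]⟩
      refine ⟨T.min' hTne, ?_, fun hmem => ?_⟩
      · have := T.min'_mem hTne
        simp only [hT, Finset.mem_filter, Finset.mem_univ, true_and] at this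
        exact this
      · simp only [Set.mem_iUnion] at hmem
        obtain ⟨j, hj, hyj⟩ := hmem
        exact absurd (T.min'_le j (by simp [hT, hyj])) (not_le.2 hj)
    have hCsub : ∀ i, C i ⊆ {y | dist y (x i) = Metric.infDist y (Set.range x)} :=
      fun i => Set.diff_subset
    exact iInf_le_of_le (fun i => (μ (C i)).toReal) (key C hCm hCd hCu hCsub).le
  · refine le_iInf fun a => ?_
    refine le_iSup_of_le ⟨fun y => Metric.infDist y (Set.range x) ^ s, hholder⟩ ?_
    exact (hval a).ge
end
end

section
/- Let 0 < s ≤ 1, let D ⊂ ℝ^d be a bounded set, let μ be a Borel probability measure on ℝ^d supported on D, and let P_n = {x₁, …, x_n} ⊂ D be a finite set of n distinct points. Then there exist constants c, C > 0 depending only on D (and not on μ, n or P_n) such that c·D_{μ,P_n,s} ≤ inf over weight vectors a ∈ ℝⁿ of sup over functions f : D → ℝ with sup_{x∈D}|f(x)| + sup_{x≠y, x,y∈D} |f(x) − f(y)|/‖x − y‖₂^s ≤ 1 of |∫ f dμ − ∑_{i=1}^n a_i f(x_i)| ≤ C·D_{μ,P_n,s}. Moreover, the upper bound is attained (up to the constant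 C) by the Voronoi weights a_i = μ(C_i), for any measurable partition C₁, …, C_n of ℝ^d with C_i ⊆ { x : ‖x − x_i‖₂ = dist(x, P_n) } for each i. -/
open MeasureTheory
open scoped ENNReal NNReal

noncomputable section

/-- `f` has `C^s(D)`-norm at most one (Lipschitz norm for `s = 1`): the sum of its sup-norm
over `D` and its `s`-Hölder seminorm over `D` is at most `1`. -/
def HolderNormLEOne {d : ℕ} (s : ℝ) (D : Set (EuclideanSpace ℝ (Fin d)))
    (f : EuclideanSpace ℝ (Fin d) → ℝ) : Prop :=
  ∃ A B : ℝ, 0 ≤ A ∧ 0 ≤ B ∧ A + B ≤ 1 ∧ (∀ y ∈ D, |f y| ≤ A) ∧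
    ∀ y ∈ D, ∀ z ∈ D, y ≠ z → |f y - f z| ≤ B * dist y z ^ s

/-- The set of absolute integration errors of the cubature rule with nodes `x` and
weights `a`, over measurable functions with `C^s(D)`-norm at most one. -/
def errSet {d n : ℕ} (s : ℝ) (D : Set (EuclideanSpace ℝ (Fin d)))
    (μ : Measure (EuclideanSpace ℝ (Fin d))) (x : Fin n → EuclideanSpace ℝ (Fin d))
    (a : Fin n → ℝ) : Set ℝ :=
  {e : ℝ | ∃ f : EuclideanSpace ℝ (Fin d) → ℝ, Measurable f ∧ HolderNormLEOne s D f ∧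
    e = |(∫ y, f y ∂μ) - ∑ i, a i * f (x i)|}

variable {d n : ℕ} {s : ℝ} {D : Set (EuclideanSpace ℝ (Fin d))}
  {μ : Measure (EuclideanSpace ℝ (Fin d))} {x : Fin n → EuclideanSpace ℝ (Fin d)}

lemma ae_memD (hμD : μ Dᶜ = 0) : ∀ᵐ y ∂μ, y ∈ D := by
  rw [MeasureTheory.ae_iff]
  exact hμD

lemma holder_integrable [IsFiniteMeasure μ] (hμD : μ Dᶜ = 0)
    {f : EuclideanSpace ℝ (Fin d) → ℝ} (hf : Measurable f) (hH : HolderNormLEOne s D f) :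
    Integrable f μ := by
  obtain ⟨A, B, hA, hB, hAB, hfA, _⟩ := hH
  refine (integrable_const A).mono' hf.aestronglyMeasurable ?_
  filter_upwards [ae_memD hμD] with y hy
  simpa using hfA y hy

lemma zero_mem_errSet (a : Fin n → ℝ) : (0 : ℝ) ∈ errSet s D μ x a := by
  refine ⟨fun _ => 0, measurable_const, ⟨0, 0, le_refl _, le_refl _, by norm_num,
    fun y _ => by simp, fun y _ z _ _ => by simp⟩, by simp⟩

lemma bddAbove_errSet [IsProbabilityMeasure μ] (hμD : μ Dᶜ = 0) (hxD : ∀ i, x i ∈ D)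
    (a : Fin n → ℝ) : BddAbove (errSet s D μ x a) := by
  refine ⟨1 + ∑ i, |a i|, fun e he => ?_⟩
  obtain ⟨f, hf, hH, rfl⟩ := he
  obtain ⟨A, B, hA, hB, hAB, hfA, _⟩ := hH
  have hA1 : A ≤ 1 := by linarith
  have h1 : |∫ y, f y ∂μ| ≤ 1 := by
    have := norm_integral_le_of_norm_le_const (μ := μ) (f := f) (C := A)
      (by filter_upwards [ae_memD hμD] with y hy using by simpa using hfA y hy)
    rw [Real.norm_eq_abs] at this
    simp only [measure_univ, ENNReal.toReal_one, probReal_univ, mul_one] at this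
    exact this.trans hA1
  have h2 : |∑ i, a i * f (x i)| ≤ ∑ i, |a i| := by
    refine (Finset.abs_sum_le_sum_abs _ _).trans (Finset.sum_le_sum fun i _ => ?_)
    rw [abs_mul]
    calc |a i| * |f (x i)| ≤ |a i| * 1 := by
          exact mul_le_mul_of_nonneg_left ((hfA _ (hxD i)).trans hA1) (abs_nonneg _)
      _ = |a i| := mul_one _
  calc |(∫ y, f y ∂μ) - ∑ i, a i * f (x i)| ≤ |∫ y, f y ∂μ| + |∑ i, a i * f (x i)| :=
        abs_sub _ _
    _ ≤ 1 + ∑ i, |a i| := add_le_add h1 h2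
lemma voronoi_err (hs : 0 < s) [IsProbabilityMeasure μ] (hμD : μ Dᶜ = 0)
    (hxD : ∀ i, x i ∈ D)
    {V : Fin n → Set (EuclideanSpace ℝ (Fin d))}
    (hVm : ∀ i, MeasurableSet (V i)) (hVd : Pairwise (Function.onFun Disjoint V))
    (hVu : (⋃ i, V i) = Set.univ)
    (hVv : ∀ i, V i ⊆ {y | dist y (x i) = Metric.infDist y (Set.range x)})
    (hg_int : Integrable (fun y => Metric.infDist y (Set.range x) ^ s) μ) :
    ∀ e ∈ errSet s D μ x (fun i => (μ (V i)).toReal),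
      e ≤ ∫ y, Metric.infDist y (Set.range x) ^ s ∂μ := by
  intro e he
  obtain ⟨f, hf, hH, rfl⟩ := he
  set g : EuclideanSpace ℝ (Fin d) → ℝ := fun y => Metric.infDist y (Set.range x) ^ s with hg
  set F : EuclideanSpace ℝ (Fin d) → ℝ :=
    fun y => f y - ∑ i, (V i).indicator (fun _ => f (x i)) y with hFdef
  have hf_int : Integrable f μ := holder_integrable hμD hf hH
  have hind_int : ∀ i : Fin n, Integrable ((V i).indicator (fun _ => f (x i))) μ :=
    fun i => (integrable_const (f (x i))).indicator (hVm i)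
  have hF_int : Integrable F μ :=
    hf_int.sub (integrable_finset_sum _ fun i _ => hind_int i)
  have hFint : ∫ y, F y ∂μ = (∫ y, f y ∂μ) - ∑ i, (μ (V i)).toReal * f (x i) := by
    rw [hFdef]
    rw [integral_sub hf_int (integrable_finset_sum _ fun i _ => hind_int i),
      integral_finset_sum _ fun i _ => hind_int i]
    congr 1
    refine Finset.sum_congr rfl fun i _ => ?_
    rw [integral_indicator_const _ (hVm i), smul_eq_mul]
    rfl
  have haeb : ∀ᵐ y ∂μ, |F y| ≤ g y := by
    filter_upwards [ae_memD hμD] with y hyD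
    obtain ⟨i, hyV⟩ : ∃ i, y ∈ V i := by
      have hy := Set.mem_univ y
      rw [← hVu] at hy
      exact Set.mem_iUnion.1 hy
    have hsum : (∑ j, (V j).indicator (fun _ => f (x j)) y) = f (x i) := by
      rw [Finset.sum_eq_single_of_mem i (Finset.mem_univ i)]
      · simp [Set.indicator_of_mem hyV]
      · intro j _ hji
        exact Set.indicator_of_notMem
          (fun hyVj => (Set.disjoint_left.1 (hVd hji) hyVj) hyV) _
    have hgy : g y = dist y (x i) ^ s := by simp only [hg]; rw [← hVv i hyV]
    show |f y - ∑ j, (V j).indicator (fun _ => f (x j)) y| ≤ g y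
    rw [hsum]
    by_cases hyx : y = x i
    · simp only [hyx, sub_self, abs_zero]
      exact Real.rpow_nonneg Metric.infDist_nonneg s
    · obtain ⟨A, B, hA, hB, hAB, hfA, hfB⟩ := hH
      have hB1 : B ≤ 1 := by linarith
      calc |f y - f (x i)| ≤ B * dist y (x i) ^ s := hfB y hyD (x i) (hxD i) hyx
        _ ≤ 1 * dist y (x i) ^ s :=
            mul_le_mul_of_nonneg_right hB1 (Real.rpow_nonneg dist_nonneg s)
        _ = g y := by rw [one_mul, hgy]
  calc |(∫ y, f y ∂μ) - ∑ i, (μ (V i)).toReal * f (x i)| = |∫ y, F y ∂μ| := by rw [hFint]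
    _ ≤ ∫ y, |F y| ∂μ := by
        simpa [Real.norm_eq_abs] using norm_integral_le_integral_norm (μ := μ) F
    _ ≤ ∫ y, g y ∂μ := integral_mono_ae hF_int.abs hg_int haeb
lemma rpow_subadd {s : ℝ} (hs : 0 ≤ s) (hs1 : s ≤ 1) {u v : ℝ} (hu : 0 ≤ u) (hv : 0 ≤ v) :
    (u + v) ^ s ≤ u ^ s + v ^ s := by
  have h := NNReal.rpow_add_le_add_rpow u.toNNReal v.toNNReal hs hs1
  have h2 := NNReal.coe_le_coe.2 h
  rw [NNReal.coe_add, NNReal.coe_rpow, NNReal.coe_rpow, NNReal.coe_rpow, ← Real.toNNReal_add hu hv,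
    Real.coe_toNNReal _ (by positivity), Real.coe_toNNReal _ hu, Real.coe_toNNReal _ hv] at h2
  exact h2

lemma holder_rpow {s : ℝ} (hs : 0 ≤ s) (hs1 : s ≤ 1) {a b : ℝ} (ha : 0 ≤ a) (hb : 0 ≤ b) :
    |a ^ s - b ^ s| ≤ |a - b| ^ s := by
  wlog hab : b ≤ a generalizing a b
  · rw [abs_sub_comm, abs_sub_comm a b]; exact this hb ha (le_of_not_ge hab)
  have h2 : 0 ≤ a - b := sub_nonneg.2 hab
  have key := rpow_subadd hs hs1 hb h2
  rw [add_sub_cancel] at key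
  rw [abs_of_nonneg h2, abs_of_nonneg (sub_nonneg.2 (Real.rpow_le_rpow hb hab hs))]
  linarith

theorem stmt14 (d : ℕ) (D : Set (EuclideanSpace ℝ (Fin d)))
    (hbd : Bornology.IsBounded D) :
    ∃ c C : ℝ, 0 < c ∧ 0 < C ∧
      ∀ s : ℝ, 0 < s → s ≤ 1 →
      ∀ μ : Measure (EuclideanSpace ℝ (Fin d)), IsProbabilityMeasure μ → μ Dᶜ = 0 →
      ∀ n : ℕ, 1 ≤ n → ∀ x : Fin n → EuclideanSpace ℝ (Fin d),
        Function.Injective x → (∀ i, x i ∈ D) →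
        -- two-sided bound by the distortion for the minimal worst-case error:
        (c * (∫ y, Metric.infDist y (Set.range x) ^ s ∂μ) ≤
            sInf {r : ℝ | ∃ a : Fin n → ℝ, r = sSup (errSet s D μ x a)} ∧
          sInf {r : ℝ | ∃ a : Fin n → ℝ, r = sSup (errSet s D μ x a)} ≤
            C * (∫ y, Metric.infDist y (Set.range x) ^ s ∂μ)) ∧
        -- the upper bound is attained (up to the constant C) by the Voronoi weights:
        ∀ V : Fin n → Set (EuclideanSpace ℝ (Fin d)),
          (∀ i, MeasurableSet (V i)) →
          (Pairwise (Function.onFun Disjoint V)) →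
          (⋃ i, V i) = Set.univ →
          (∀ i, V i ⊆ {y | dist y (x i) = Metric.infDist y (Set.range x)}) →
          sSup (errSet s D μ x (fun i => (μ (V i)).toReal)) ≤
            C * (∫ y, Metric.infDist y (Set.range x) ^ s ∂μ) := by
  classical
  obtain ⟨r, hr⟩ := hbd.subset_closedBall 0
  set K : ℝ := max (2 * r) 1 with hK
  have hK1 : (1 : ℝ) ≤ K := le_max_right _ _
  have hK0 : (0 : ℝ) < K := lt_of_lt_of_le one_pos hK1
  have h1K : (0 : ℝ) < 1 + K := by linarith
  refine ⟨(1 + K)⁻¹, 1, inv_pos.2 h1K, one_pos, ?_⟩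
  intro s hs hs1 μ hμ hμD n hn x hinj hxD
  haveI := hμ
  have hi0 : 0 < n := hn
  set i0 : Fin n := ⟨0, hi0⟩
  set g : EuclideanSpace ℝ (Fin d) → ℝ := fun y => Metric.infDist y (Set.range x) ^ s with hg
  have hg_cont : Continuous g :=
    (Real.continuous_rpow_const hs.le).comp (Metric.continuous_infDist_pt _)
  have hg_nonneg : ∀ y, 0 ≤ g y := fun y => Real.rpow_nonneg Metric.infDist_nonneg s
  have hgK : ∀ y ∈ D, g y ≤ K := by
    intro y hy
    have hd : dist y (x i0) ≤ K := by
      calc dist y (x i0) ≤ dist y 0 + dist 0 (x i0) := dist_triangle _ _ _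
        _ ≤ r + r := by
            refine add_le_add (Metric.mem_closedBall.1 (hr hy)) ?_
            rw [dist_comm]
            exact Metric.mem_closedBall.1 (hr (hxD i0))
        _ ≤ K := by rw [hK]; rw [two_mul] at *; exact le_max_left _ _
    calc g y ≤ dist y (x i0) ^ s :=
          Real.rpow_le_rpow Metric.infDist_nonneg (Metric.infDist_le_dist_of_mem ⟨i0, rfl⟩) hs.le
      _ ≤ K ^ s := Real.rpow_le_rpow dist_nonneg hd hs.le
      _ ≤ K ^ (1 : ℝ) := Real.rpow_le_rpow_of_exponent_le hK1 hs1
      _ = K := Real.rpow_one K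
  have hg_int : Integrable g μ := by
    refine (integrable_const K).mono' hg_cont.measurable.aestronglyMeasurable ?_
    filter_upwards [ae_memD hμD] with y hy
    rw [Real.norm_eq_abs, abs_of_nonneg (hg_nonneg y)]
    exact hgK y hy
  have hIg : 0 ≤ ∫ y, g y ∂μ := integral_nonneg hg_nonneg
  -- the extremal function for the lower bound
  set f0 : EuclideanSpace ℝ (Fin d) → ℝ := fun y => (1 + K)⁻¹ * g y with hf0
  have hf0_meas : Measurable f0 := (hg_cont.measurable.const_mul _)
  have hf0_hold : HolderNormLEOne s D f0 := by
    refine ⟨(1 + K)⁻¹ * K, (1 + K)⁻¹, by positivity, by positivity, ?_, ?_, ?_⟩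
    · rw [show (1 + K)⁻¹ * K + (1 + K)⁻¹ = (1 + K)⁻¹ * (1 + K) by ring,
        inv_mul_cancel₀ h1K.ne']
    · intro y hy
      rw [abs_of_nonneg (mul_nonneg (inv_nonneg.2 h1K.le) (hg_nonneg y))]
      exact mul_le_mul_of_nonneg_left (hgK y hy) (inv_nonneg.2 h1K.le)
    · intro y _ z _ _
      have hlip : |Metric.infDist y (Set.range x) - Metric.infDist z (Set.range x)| ≤ dist y z := by
        have := (Metric.lipschitz_infDist_pt (Set.range x)).dist_le_mul y z
        rw [NNReal.coe_one, one_mul, Real.dist_eq] at this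
        exact this
      have h1 : |g y - g z| ≤ dist y z ^ s := by
        calc |g y - g z| ≤ |Metric.infDist y (Set.range x) - Metric.infDist z (Set.range x)| ^ s :=
              holder_rpow hs.le hs1 Metric.infDist_nonneg Metric.infDist_nonneg
          _ ≤ dist y z ^ s := Real.rpow_le_rpow (abs_nonneg _) hlip hs.le
      calc |f0 y - f0 z| = (1 + K)⁻¹ * |g y - g z| := by
            rw [show f0 y - f0 z = (1 + K)⁻¹ * (g y - g z) from (mul_sub _ _ _).symm, abs_mul,
              abs_of_nonneg (inv_nonneg.2 h1K.le)]
        _ ≤ (1 + K)⁻¹ * dist y z ^ s := mul_le_mul_of_nonneg_left h1 (inv_nonneg.2 h1K.le)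
  have hf0_nodes : ∀ i, f0 (x i) = 0 := by
    intro i
    have : Metric.infDist (x i) (Set.range x) = 0 := Metric.infDist_zero_of_mem ⟨i, rfl⟩
    simp [hf0, hg, this, Real.zero_rpow hs.ne']
  have hf0_err : ∀ a : Fin n → ℝ,
      |(∫ y, f0 y ∂μ) - ∑ i, a i * f0 (x i)| = (1 + K)⁻¹ * ∫ y, g y ∂μ := by
    intro a
    have hsum : ∑ i, a i * f0 (x i) = 0 := by
      refine Finset.sum_eq_zero fun i _ => ?_
      rw [hf0_nodes i, mul_zero]
    rw [hsum, sub_zero]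
    simp only [hf0]
    rw [integral_const_mul, abs_of_nonneg (mul_nonneg (inv_nonneg.2 h1K.le) hIg)]
  have hlow : ∀ a : Fin n → ℝ, (1 + K)⁻¹ * (∫ y, g y ∂μ) ≤ sSup (errSet s D μ x a) := by
    intro a
    refine le_csSup (bddAbove_errSet hμD hxD a) ?_
    exact ⟨f0, hf0_meas, hf0_hold, (hf0_err a).symm⟩
  -- the generic upper bound for Voronoi partitions
  have hup : ∀ V : Fin n → Set (EuclideanSpace ℝ (Fin d)),
      (∀ i, MeasurableSet (V i)) → (Pairwise (Function.onFun Disjoint V)) →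
      (⋃ i, V i) = Set.univ →
      (∀ i, V i ⊆ {y | dist y (x i) = Metric.infDist y (Set.range x)}) →
      sSup (errSet s D μ x (fun i => (μ (V i)).toReal)) ≤ 1 * ∫ y, g y ∂μ := by
    intro V hVm hVd hVu hVv
    rw [one_mul]
    exact csSup_le ⟨0, zero_mem_errSet _⟩ (voronoi_err hs hμD hxD hVm hVd hVu hVv hg_int)
  -- construction of a Voronoi partition
  set W : Fin n → Set (EuclideanSpace ℝ (Fin d)) :=
    fun i => {y | ∀ j, dist y (x i) ≤ dist y (x j)} with hW
  have hWm : ∀ i, MeasurableSet (W i) := by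
    intro i
    have : W i = ⋂ j, {y | dist y (x i) ≤ dist y (x j)} := by
      ext y; simp [hW, Set.mem_iInter]
    rw [this]
    exact MeasurableSet.iInter fun j =>
      (isClosed_le (continuous_id.dist continuous_const)
        (continuous_id.dist continuous_const)).measurableSet
  set V0 : Fin n → Set (EuclideanSpace ℝ (Fin d)) :=
    fun i => W i \ ⋃ j, ⋃ (_ : j < i), W j with hV0
  have hV0m : ∀ i, MeasurableSet (V0 i) := fun i =>
    (hWm i).diff (MeasurableSet.iUnion fun j => MeasurableSet.iUnion fun _ => hWm j)
  have hV0key : ∀ i j : Fin n, i < j → Disjoint (V0 i) (V0 j) := by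
    intro i j hij
    refine Set.disjoint_left.2 fun y hyi hyj => ?_
    exact hyj.2 (Set.mem_iUnion.2 ⟨i, Set.mem_iUnion.2 ⟨hij, hyi.1⟩⟩)
  have hV0d : Pairwise (Function.onFun Disjoint V0) := by
    intro i j hij
    rcases lt_or_gt_of_ne hij with h | h
    · exact hV0key i j h
    · exact (hV0key j i h).symm
  have hV0u : (⋃ i, V0 i) = Set.univ := by
    refine Set.eq_univ_of_forall fun y => ?_
    have hTne : (Finset.univ.filter (fun i => y ∈ W i)).Nonempty := by
      obtain ⟨i, -, hi⟩ := Finset.exists_min_image Finset.univ (fun i => dist y (x i))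
        ⟨i0, Finset.mem_univ _⟩
      exact ⟨i, Finset.mem_filter.2 ⟨Finset.mem_univ _, fun j => hi j (Finset.mem_univ _)⟩⟩
    set T := Finset.univ.filter (fun i => y ∈ W i)
    set im := T.min' hTne with him
    refine Set.mem_iUnion.2 ⟨im, (Finset.mem_filter.1 (T.min'_mem hTne)).2, fun hmem => ?_⟩
    obtain ⟨j, hj⟩ := Set.mem_iUnion.1 hmem
    obtain ⟨hjlt, hyWj⟩ := Set.mem_iUnion.1 hj
    exact absurd (T.min'_le j (Finset.mem_filter.2 ⟨Finset.mem_univ _, hyWj⟩)) (not_le.2 hjlt)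
  have hV0v : ∀ i, V0 i ⊆ {y | dist y (x i) = Metric.infDist y (Set.range x)} := by
    intro i y hy
    have hyW : y ∈ W i := hy.1
    obtain ⟨z, hzmem, hzd⟩ := ((Set.finite_range x).isCompact).exists_infDist_eq_dist
      ⟨x i0, i0, rfl⟩ y
    obtain ⟨j, rfl⟩ := hzmem
    exact le_antisymm (hzd ▸ hyW j) (Metric.infDist_le_dist_of_mem ⟨i, rfl⟩)
  -- assemble
  have hmain := hup V0 hV0m hV0d hV0u hV0v
  refine ⟨⟨?_, ?_⟩, hup⟩
  · refine le_csInf ⟨sSup (errSet s D μ x (fun _ => 0)), fun _ => 0, rfl⟩ ?_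
    rintro r ⟨a, rfl⟩
    exact hlow a
  · have hbdd : BddBelow {r : ℝ | ∃ a : Fin n → ℝ, r = sSup (errSet s D μ x a)} := by
      refine ⟨0, ?_⟩
      rintro r ⟨a, rfl⟩
      exact le_csSup (bddAbove_errSet hμD hxD a) (zero_mem_errSet a)
    exact le_trans (csInf_le hbdd ⟨fun i => (μ (V0 i)).toReal, rfl⟩) hmain
end
end
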